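/- arXiv:hep-th/9409104 — 3 statements merged into one kernel-verified Lean document; each statement's English description precedes it below -/
import Mathlib

section
/- The alternating trilinear forms T₁ and T₂ on so(3,1) are linearly independent over ℝ: if a T₁ + b T₂ = 0 as a trilinear form on so(3,1) for real numbers a, b, then a = b = 0. -/
open Matrix

attribute [local instance 100] LieRing.ofAssociativeRing

noncomputable section

/-- The Minkowski metric `η = diag(−1,1,1,1)`. -/
def eta : Matrix (Fin 4) (Fin 4) ℝ := Matrix.diagonal ![-1, 1, 1, 1]

/-- The real Lie algebra `so(3,1)`: 4×4 real matrices `A` with `Aᵀη + ηA = 0`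
(skew-adjoint with respect to `η`), with the matrix commutator as bracket. -/
def so31 : LieSubalgebra ℝ (Matrix (Fin 4) (Fin 4) ℝ) :=
  skewAdjointMatricesLieSubalgebra eta

/-- The totally antisymmetric symbol `ε` with `ε^{0123} = 1` (realized as the
determinant of the corresponding rows of the identity matrix). -/
def eps (a b c d : Fin 4) : ℝ :=
  Matrix.det (Matrix.of fun i j => if ![a, b, c, d] i = j then (1 : ℝ) else 0)

/-- The trilinear form `T₁(A,B,C) = tr(A[B,C])` on `so(3,1)`. -/
def T1 (A B C : so31) : ℝ :=
  Matrix.trace ((A : Matrix (Fin 4) (Fin 4) ℝ) *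
    ((B : Matrix (Fin 4) (Fin 4) ℝ) * (C : Matrix (Fin 4) (Fin 4) ℝ) -
     (C : Matrix (Fin 4) (Fin 4) ℝ) * (B : Matrix (Fin 4) (Fin 4) ℝ)))

/-- The trilinear form
`T₂(A,B,C) = Σ_{a,b,c,d,e,f} ε^{abcd} η^{ef} (ηA)_{ab} (ηB)_{ce} (ηC)_{df}`
on `so(3,1)` (here `η^{ef}` are the entries of `η⁻¹ = η`). -/
def T2 (A B C : so31) : ℝ :=
  ∑ a, ∑ b, ∑ c, ∑ d, ∑ e, ∑ f,
    eps a b c d * eta e f * (eta * (A : Matrix (Fin 4) (Fin 4) ℝ)) a b *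
      (eta * (B : Matrix (Fin 4) (Fin 4) ℝ)) c e *
      (eta * (C : Matrix (Fin 4) (Fin 4) ℝ)) d f

/-! Auxiliary: explicit elements of `so(3,1)`. -/

def J1m : Matrix (Fin 4) (Fin 4) ℝ := !![0,0,0,0; 0,0,0,0; 0,0,0,1; 0,0,-1,0]
def J2m : Matrix (Fin 4) (Fin 4) ℝ := !![0,0,0,0; 0,0,0,-1; 0,0,0,0; 0,1,0,0]
def J3m : Matrix (Fin 4) (Fin 4) ℝ := !![0,0,0,0; 0,0,1,0; 0,-1,0,0; 0,0,0,0]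
def K1m : Matrix (Fin 4) (Fin 4) ℝ := !![0,1,0,0; 1,0,0,0; 0,0,0,0; 0,0,0,0]
def K2m : Matrix (Fin 4) (Fin 4) ℝ := !![0,0,1,0; 0,0,0,0; 1,0,0,0; 0,0,0,0]
def K3m : Matrix (Fin 4) (Fin 4) ℝ := !![0,0,0,1; 0,0,0,0; 0,0,0,0; 1,0,0,0]

lemma mem_aux (M : Matrix (Fin 4) (Fin 4) ℝ) (h : Mᵀ * eta = eta * (-M)) : M ∈ so31 := by
  rw [so31, mem_skewAdjointMatricesLieSubalgebra, mem_skewAdjointMatricesSubmodule]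
  exact h

lemma J1mem : J1m ∈ so31 := by
  apply mem_aux
  ext i j
  fin_cases i <;> fin_cases j <;>
    simp [J1m, eta, Matrix.mul_apply, Fin.sum_univ_four, Matrix.diagonal, Matrix.transpose_apply, Matrix.vecHead, Matrix.vecTail]

lemma J2mem : J2m ∈ so31 := by
  apply mem_aux
  ext i j
  fin_cases i <;> fin_cases j <;>
    simp [J2m, eta, Matrix.mul_apply, Fin.sum_univ_four, Matrix.diagonal, Matrix.transpose_apply, Matrix.vecHead, Matrix.vecTail]

lemma J3mem : J3m ∈ so31 := by
  apply mem_aux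
  ext i j
  fin_cases i <;> fin_cases j <;>
    simp [J3m, eta, Matrix.mul_apply, Fin.sum_univ_four, Matrix.diagonal, Matrix.transpose_apply, Matrix.vecHead, Matrix.vecTail]

lemma K1mem : K1m ∈ so31 := by
  apply mem_aux
  ext i j
  fin_cases i <;> fin_cases j <;>
    simp [K1m, eta, Matrix.mul_apply, Fin.sum_univ_four, Matrix.diagonal, Matrix.transpose_apply, Matrix.vecHead, Matrix.vecTail]

lemma K2mem : K2m ∈ so31 := by
  apply mem_aux
  ext i j
  fin_cases i <;> fin_cases j <;>
    simp [K2m, eta, Matrix.mul_apply, Fin.sum_univ_four, Matrix.diagonal, Matrix.transpose_apply, Matrix.vecHead, Matrix.vecTail]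

lemma K3mem : K3m ∈ so31 := by
  apply mem_aux
  ext i j
  fin_cases i <;> fin_cases j <;>
    simp [K3m, eta, Matrix.mul_apply, Fin.sum_univ_four, Matrix.diagonal, Matrix.transpose_apply, Matrix.vecHead, Matrix.vecTail]

def J1 : so31 := ⟨J1m, J1mem⟩
def J2 : so31 := ⟨J2m, J2mem⟩
def J3 : so31 := ⟨J3m, J3mem⟩
def K1 : so31 := ⟨K1m, K1mem⟩
def K2 : so31 := ⟨K2m, K2mem⟩
def K3 : so31 := ⟨K3m, K3mem⟩

lemma T1_JJJ : T1 J1 J2 J3 = 2 := by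
  simp [T1, J1, J2, J3, J1m, J2m, J3m, Matrix.trace, Matrix.mul_apply,
    Fin.sum_univ_four, Matrix.diag]
  norm_num

lemma T1_KKK : T1 K1 K2 K3 = 0 := by
  simp [T1, K1, K2, K3, K1m, K2m, K3m, Matrix.trace, Matrix.mul_apply,
    Fin.sum_univ_four, Matrix.diag]

lemma T2_JJJ : T2 J1 J2 J3 = 0 := by
  simp [T2, J1, J2, J3, J1m, J2m, J3m, eps, eta, Matrix.mul_apply,
    Fin.sum_univ_four, Matrix.diagonal, Matrix.vecHead, Matrix.vecTail]
  norm_num [Matrix.det_succ_row_zero, Fin.sum_univ_succ, Matrix.submatrix_apply, Fin.succAbove, Matrix.vecHead, Matrix.vecTail]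
  simp (config := { decide := true })

lemma T2_KKK : T2 K1 K2 K3 = 2 := by
  simp [T2, K1, K2, K3, K1m, K2m, K3m, eps, eta, Matrix.mul_apply,
    Fin.sum_univ_four, Matrix.diagonal, Matrix.vecHead, Matrix.vecTail]
  norm_num [Matrix.det_succ_row_zero, Fin.sum_univ_succ, Matrix.submatrix_apply, Fin.succAbove, Matrix.vecHead, Matrix.vecTail]
  simp (config := { decide := true })
  all_goals norm_num

/-- the alternating trilinear forms `T₁` and `T₂` on `so(3,1)` are
linearly independent over `ℝ`: if `a T₁ + b T₂ = 0` as a trilinear form, then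
`a = b = 0`. -/
theorem T1_T2_linearly_independent (a b : ℝ)
    (h : ∀ A B C : so31, a * T1 A B C + b * T2 A B C = 0) :
    a = 0 ∧ b = 0 := by
  have h1 := h J1 J2 J3
  have h2 := h K1 K2 K3
  rw [T1_JJJ, T2_JJJ] at h1
  rw [T1_KKK, T2_KKK] at h2
  constructor <;> linarith
end
end

section
/- The wedge product T₁ ∧ T₂ of the alternating trilinear forms T₁ and T₂ is a nonzero alternating 6-linear form on the 6-dimensional Lie algebra so(3,1), and it is not a Chevalley–Eilenberg 6-coboundary: there is no alternating 5-linear form b : so(3,1)⁵ → ℝ with T₁ ∧ T₂ = db. In particular, T₁ ∧ T₂ represents a nontrivial class in the degree-six Lie algebra cohomology of so(3,1) with trivial real coefficients. -/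
open Matrix

attribute [local instance 100] LieRing.ofAssociativeRing

noncomputable section

/-- The Chevalley–Eilenberg differential (trivial real coefficients) of an
`(m+1)`-cochain:
`(dc)(x₀,…,x_{m+1}) = Σ_{i<j} (−1)^{i+j} c([x_i,x_j], x₀,…,x̂_i,…,x̂_j,…,x_{m+1})`. -/
def ceDiff {g : Type*} [LieRing g] {m : ℕ}
    (c : (Fin (m + 1) → g) → ℝ) : (Fin (m + 2) → g) → ℝ :=
  fun x => ∑ i : Fin (m + 2), ∑ j : Fin (m + 2),
    if hij : i < j then
      (-1 : ℝ) ^ ((i : ℕ) + (j : ℕ)) *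
        c (Fin.cons ⁅x i, x j⁆ fun t : Fin m =>
            x (j.succAbove ((⟨(i : ℕ), by
                have h1 : (i : ℕ) < (j : ℕ) := hij
                have h2 := j.isLt
                omega⟩ : Fin (m + 1)).succAbove t)))
    else 0

/-- The wedge product of two alternating trilinear forms (the usual antisymmetrized
product, with the shuffle normalization `1/(3!·3!)`). -/
def wedge33 (f h : (Fin 3 → so31) → ℝ) : (Fin 6 → so31) → ℝ :=
  fun x => (1 / 36 : ℝ) * ∑ σ : Equiv.Perm (Fin 6),
    ((Equiv.Perm.sign σ : ℤ) : ℝ) *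
      f (fun i : Fin 3 => x (σ (Fin.castAdd 3 i))) *
      h (fun i : Fin 3 => x (σ (Fin.addNat i 3)))
set_option maxRecDepth 10000

/-! ### vector lookup helpers -/

section VecLemmas
variable {α : Type*}

lemma v6_0 (a b c d e f : α) : ![a,b,c,d,e,f] (0 : Fin 6) = a := rfl
lemma v6_1 (a b c d e f : α) : ![a,b,c,d,e,f] (1 : Fin 6) = b := rfl
lemma v6_2 (a b c d e f : α) : ![a,b,c,d,e,f] (2 : Fin 6) = c := rfl
lemma v6_3 (a b c d e f : α) : ![a,b,c,d,e,f] (3 : Fin 6) = d := rfl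
lemma v6_4 (a b c d e f : α) : ![a,b,c,d,e,f] (4 : Fin 6) = e := rfl
lemma v6_5 (a b c d e f : α) : ![a,b,c,d,e,f] (5 : Fin 6) = f := rfl
lemma v4_0 (a b c d : α) : ![a,b,c,d] (0 : Fin 4) = a := rfl
lemma v4_1 (a b c d : α) : ![a,b,c,d] (1 : Fin 4) = b := rfl
lemma v4_2 (a b c d : α) : ![a,b,c,d] (2 : Fin 4) = c := rfl
lemma v4_3 (a b c d : α) : ![a,b,c,d] (3 : Fin 4) = d := rfl

end VecLemmas

/-! ### Integer-level data and cast helpers -/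

/-- Integer versions of the six standard basis matrices of `so(3,1)`:
three rotations followed by three boosts. -/
def eZ : Fin 6 → Matrix (Fin 4) (Fin 4) ℤ :=
  ![!![0, 0, 0, 0; 0, 0, 0, 0; 0, 0, 0, 1; 0, 0, -1, 0],
    !![0, 0, 0, 0; 0, 0, 0, -1; 0, 0, 0, 0; 0, 1, 0, 0],
    !![0, 0, 0, 0; 0, 0, 1, 0; 0, -1, 0, 0; 0, 0, 0, 0],
    !![0, 1, 0, 0; 1, 0, 0, 0; 0, 0, 0, 0; 0, 0, 0, 0],
    !![0, 0, 1, 0; 0, 0, 0, 0; 1, 0, 0, 0; 0, 0, 0, 0],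
    !![0, 0, 0, 1; 0, 0, 0, 0; 0, 0, 0, 0; 1, 0, 0, 0]]

def etaZ : Matrix (Fin 4) (Fin 4) ℤ := Matrix.diagonal ![-1, 1, 1, 1]

/-- The real basis matrices. -/
def eM (k : Fin 6) : Matrix (Fin 4) (Fin 4) ℝ := (eZ k).map (Int.cast)

lemma mapZ_mul (M N : Matrix (Fin 4) (Fin 4) ℤ) :
    (M * N).map (Int.cast : ℤ → ℝ) = M.map Int.cast * N.map Int.cast := by
  ext i j
  simp [Matrix.mul_apply, Matrix.map_apply]

lemma mapZ_sub (M N : Matrix (Fin 4) (Fin 4) ℤ) :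
    (M - N).map (Int.cast : ℤ → ℝ) = M.map Int.cast - N.map Int.cast := by
  ext i j; simp [Matrix.map_apply]

lemma mapZ_neg (M : Matrix (Fin 4) (Fin 4) ℤ) :
    (-M).map (Int.cast : ℤ → ℝ) = -(M.map Int.cast) := by
  ext i j; simp [Matrix.map_apply]

lemma mapZ_transpose (M : Matrix (Fin 4) (Fin 4) ℤ) :
    Mᵀ.map (Int.cast : ℤ → ℝ) = (M.map Int.cast)ᵀ := by
  ext i j; simp [Matrix.map_apply]

lemma mapZ_trace (M : Matrix (Fin 4) (Fin 4) ℤ) :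
    (M.map (Int.cast : ℤ → ℝ)).trace = ((M.trace : ℤ) : ℝ) := by
  simp [Matrix.trace, Matrix.diag, Matrix.map_apply]

lemma eta_eq_map : eta = etaZ.map (Int.cast : ℤ → ℝ) := by
  ext i j
  rw [eta, etaZ]
  by_cases h : i = j
  · subst h
    rw [Matrix.diagonal_apply_eq, Matrix.map_apply, Matrix.diagonal_apply_eq]
    fin_cases i <;> norm_num [v4_0, v4_1, v4_2, v4_3]
  · rw [Matrix.diagonal_apply_ne _ h, Matrix.map_apply, Matrix.diagonal_apply_ne _ h,
      Int.cast_zero]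

lemma eM_mem (k : Fin 6) : eM k ∈ so31 := by
  rw [so31, mem_skewAdjointMatricesLieSubalgebra, mem_skewAdjointMatricesSubmodule]
  show (eM k)ᵀ * eta = eta * (-(eM k))
  rw [eta_eq_map, eM, ← mapZ_transpose, ← mapZ_mul, ← mapZ_neg, ← mapZ_mul]
  have : (eZ k)ᵀ * etaZ = etaZ * -eZ k := by fin_cases k <;> decide
  rw [this]

/-- The standard basis of `so(3,1)` as elements of the subalgebra. -/
def e (k : Fin 6) : so31 := ⟨eM k, eM_mem k⟩

lemma coe_sum {ι : Type*} (s : Finset ι) (f : ι → so31) :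
    ((∑ i ∈ s, f i : so31) : Matrix (Fin 4) (Fin 4) ℝ) =
      ∑ i ∈ s, (f i : Matrix (Fin 4) (Fin 4) ℝ) := by
  classical
  induction s using Finset.induction with
  | empty => simp
  | insert _ _ h ih => rw [Finset.sum_insert h, Finset.sum_insert h, ← ih]; rfl

/-! ### finrank so31 = 6 -/

def rowIdx : Fin 6 → Fin 4 := ![2, 3, 1, 0, 0, 0]
def colIdx : Fin 6 → Fin 4 := ![3, 1, 2, 1, 2, 3]

def phi : so31 →ₗ[ℝ] (Fin 6 → ℝ) where
  toFun A := fun k => (A : Matrix (Fin 4) (Fin 4) ℝ) (rowIdx k) (colIdx k)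
  map_add' A B := by funext k; rfl
  map_smul' c A := by funext k; rfl

def psi : (Fin 6 → ℝ) →ₗ[ℝ] so31 where
  toFun v := ∑ k, v k • e k
  map_add' v w := by
    simp [add_smul, Finset.sum_add_distrib]
  map_smul' c v := by
    simp [Finset.smul_sum, smul_smul]

lemma so31_rel (A : so31) : ∀ i j : Fin 4,
    (A : Matrix (Fin 4) (Fin 4) ℝ) j i * (![-1,1,1,1] j) =
      (![-1,1,1,1] i) * (-((A : Matrix (Fin 4) (Fin 4) ℝ) i j)) := by
  intro i j
  have hmem : (A : Matrix (Fin 4) (Fin 4) ℝ) ∈ skewAdjointMatricesLieSubalgebra eta := A.2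
  rw [mem_skewAdjointMatricesLieSubalgebra, mem_skewAdjointMatricesSubmodule] at hmem
  have h : (A : Matrix (Fin 4) (Fin 4) ℝ)ᵀ * eta = eta * (-(A : Matrix (Fin 4) (Fin 4) ℝ)) := hmem
  have := congrFun (congrFun h i) j
  rwa [eta, Matrix.mul_diagonal, Matrix.diagonal_mul, Matrix.transpose_apply,
    Matrix.neg_apply] at this

lemma fmk4_0 (h : (0:ℕ) < 4) : (⟨0,h⟩ : Fin 4) = 0 := rfl
lemma fmk4_1 (h : (1:ℕ) < 4) : (⟨1,h⟩ : Fin 4) = 1 := rfl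
lemma fmk4_2 (h : (2:ℕ) < 4) : (⟨2,h⟩ : Fin 4) = 2 := rfl
lemma fmk4_3 (h : (3:ℕ) < 4) : (⟨3,h⟩ : Fin 4) = 3 := rfl
lemma fmk6_0 (h : (0:ℕ) < 6) : (⟨0,h⟩ : Fin 6) = 0 := rfl
lemma fmk6_1 (h : (1:ℕ) < 6) : (⟨1,h⟩ : Fin 6) = 1 := rfl
lemma fmk6_2 (h : (2:ℕ) < 6) : (⟨2,h⟩ : Fin 6) = 2 := rfl
lemma fmk6_3 (h : (3:ℕ) < 6) : (⟨3,h⟩ : Fin 6) = 3 := rfl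
lemma fmk6_4 (h : (4:ℕ) < 6) : (⟨4,h⟩ : Fin 6) = 4 := rfl
lemma fmk6_5 (h : (5:ℕ) < 6) : (⟨5,h⟩ : Fin 6) = 5 := rfl

lemma e_apply (m : Fin 6) (i j : Fin 4) :
    (e m : Matrix (Fin 4) (Fin 4) ℝ) i j = ((eZ m i j : ℤ) : ℝ) := rfl

lemma coe_smul' (c : ℝ) (x : so31) :
    ((c • x : so31) : Matrix (Fin 4) (Fin 4) ℝ) = c • (x : Matrix (Fin 4) (Fin 4) ℝ) := rfl

lemma phi_psi (v : Fin 6 → ℝ) : phi (psi v) = v := by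
  funext k
  show ((∑ m, v m • e m : so31) : Matrix (Fin 4) (Fin 4) ℝ) (rowIdx k) (colIdx k) = v k
  rw [coe_sum, Matrix.sum_apply]
  simp only [coe_smul', Matrix.smul_apply, smul_eq_mul, Fin.sum_univ_six, e_apply]
  fin_cases k <;>
    norm_num [fmk6_0, fmk6_1, fmk6_2, fmk6_3, fmk6_4, fmk6_5, rowIdx, colIdx, v6_0, v6_1, v6_2, v6_3, v6_4, v6_5, eZ,
      Matrix.cons_val_zero, Matrix.cons_val_one, Matrix.head_cons,
      Matrix.cons_val_two, Matrix.cons_val_three, Matrix.vecHead, Matrix.vecTail]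

lemma psi_phi (A : so31) : psi (phi A) = A := by
  have hrel := so31_rel A
  have hd0 : (A : Matrix (Fin 4) (Fin 4) ℝ) 0 0 = 0 := by
    have := hrel 0 0; norm_num [v4_0] at this; linarith
  have hd1 : (A : Matrix (Fin 4) (Fin 4) ℝ) 1 1 = 0 := by
    have := hrel 1 1; norm_num [v4_1] at this; linarith
  have hd2 : (A : Matrix (Fin 4) (Fin 4) ℝ) 2 2 = 0 := by
    have := hrel 2 2; norm_num [v4_2] at this; linarith
  have hd3 : (A : Matrix (Fin 4) (Fin 4) ℝ) 3 3 = 0 := by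
    have := hrel 3 3; norm_num [v4_3] at this; linarith
  have hs1 : (A : Matrix (Fin 4) (Fin 4) ℝ) 1 0 = (A : Matrix (Fin 4) (Fin 4) ℝ) 0 1 := by
    have := hrel 0 1; norm_num [v4_0, v4_1] at this; linarith
  have hs2 : (A : Matrix (Fin 4) (Fin 4) ℝ) 2 0 = (A : Matrix (Fin 4) (Fin 4) ℝ) 0 2 := by
    have := hrel 0 2; norm_num [v4_0, v4_2] at this; linarith
  have hs3 : (A : Matrix (Fin 4) (Fin 4) ℝ) 3 0 = (A : Matrix (Fin 4) (Fin 4) ℝ) 0 3 := by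
    have := hrel 0 3; norm_num [v4_0, v4_3] at this; linarith
  have ha12 : (A : Matrix (Fin 4) (Fin 4) ℝ) 2 1 = -(A : Matrix (Fin 4) (Fin 4) ℝ) 1 2 := by
    have := hrel 1 2; norm_num [v4_1, v4_2] at this; linarith
  have ha13 : (A : Matrix (Fin 4) (Fin 4) ℝ) 3 1 = -(A : Matrix (Fin 4) (Fin 4) ℝ) 1 3 := by
    have := hrel 1 3; norm_num [v4_1, v4_3] at this; linarith
  have ha23 : (A : Matrix (Fin 4) (Fin 4) ℝ) 3 2 = -(A : Matrix (Fin 4) (Fin 4) ℝ) 2 3 := by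
    have := hrel 2 3; norm_num [v4_2, v4_3] at this; linarith
  apply Subtype.ext
  show ((∑ m, ((A : Matrix (Fin 4) (Fin 4) ℝ) (rowIdx m) (colIdx m)) • e m : so31)
      : Matrix (Fin 4) (Fin 4) ℝ) = (A : Matrix (Fin 4) (Fin 4) ℝ)
  rw [coe_sum]
  ext i j
  rw [Matrix.sum_apply]
  simp only [coe_smul', Matrix.smul_apply, smul_eq_mul, Fin.sum_univ_six, e_apply, rowIdx, colIdx,
    v6_0, v6_1, v6_2, v6_3, v6_4, v6_5]
  fin_cases i <;> fin_cases j <;>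
    · simp [fmk4_0, fmk4_1, fmk4_2, fmk4_3, eZ]
      try linarith [hd0, hd1, hd2, hd3, hs1, hs2, hs3, ha12, ha13, ha23]

def so31Equiv : so31 ≃ₗ[ℝ] (Fin 6 → ℝ) :=
  LinearEquiv.ofLinear phi psi
    (LinearMap.ext fun v => by simp only [LinearMap.comp_apply, LinearMap.id_apply]; exact phi_psi v)
    (LinearMap.ext fun A => by simp only [LinearMap.comp_apply, LinearMap.id_apply]; exact psi_phi A)

lemma finrank_so31 : Module.finrank ℝ so31 = 6 := by
  rw [so31Equiv.finrank_eq]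
  simp
/-! ### Evaluation of T1 and T2 on the basis -/

def epsE : Fin 4 → Fin 4 → Fin 4 → Fin 4 → ℤ :=
  ![![![![0, 0, 0, 0], ![0, 0, 0, 0], ![0, 0, 0, 0], ![0, 0, 0, 0]], ![![0, 0, 0, 0], ![0, 0, 0, 0], ![0, 0, 0, 1], ![0, 0, -1, 0]], ![![0, 0, 0, 0], ![0, 0, 0, -1], ![0, 0, 0, 0], ![0, 1, 0, 0]], ![![0, 0, 0, 0], ![0, 0, 1, 0], ![0, -1, 0, 0], ![0, 0, 0, 0]]], ![![![0, 0, 0, 0], ![0, 0, 0, 0], ![0, 0, 0, -1], ![0, 0, 1, 0]], ![![0, 0, 0, 0], ![0, 0, 0, 0], ![0, 0, 0, 0], ![0, 0, 0, 0]], ![![0, 0, 0, 1], ![0, 0, 0, 0], ![0, 0, 0, 0], ![-1, 0, 0, 0]], ![![0, 0, -1, 0], ![0, 0, 0, 0], ![1, 0, 0, 0], ![0, 0, 0, 0]]], ![![![0, 0, 0, 0], ![0, 0, 0, 1], ![0, 0, 0, 0], ![0, -1, 0, 0]], ![![0, 0, 0, -1], ![0, 0, 0, 0], ![0, 0, 0,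 0], ![1, 0, 0, 0]], ![![0, 0, 0, 0], ![0, 0, 0, 0], ![0, 0, 0, 0], ![0, 0, 0, 0]], ![![0, 1, 0, 0], ![-1, 0, 0, 0], ![0, 0, 0, 0], ![0, 0, 0, 0]]], ![![![0, 0, 0, 0], ![0, 0, -1, 0], ![0, 1, 0, 0], ![0, 0, 0, 0]], ![![0, 0, 1, 0], ![0, 0, 0, 0], ![-1, 0, 0, 0], ![0, 0, 0, 0]], ![![0, -1, 0, 0], ![1, 0, 0, 0], ![0, 0, 0, 0], ![0, 0, 0, 0]], ![![0, 0, 0, 0], ![0, 0, 0, 0], ![0, 0, 0, 0], ![0, 0, 0, 0]]]]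

lemma eps_cast (a b c d : Fin 4) : eps a b c d = ((epsE a b c d : ℤ) : ℝ) := by
  have h1 : ((Matrix.of fun i j => if ![a, b, c, d] i = j then (1 : ℤ) else 0).det : ℤ)
      = epsE a b c d := by
    revert a b c d; decide
  rw [eps, ← h1, show (((Matrix.of fun i j => if ![a, b, c, d] i = j then (1 : ℤ) else 0).det : ℤ) : ℝ)
      = (Int.castRingHom ℝ) ((Matrix.of fun i j => if ![a, b, c, d] i = j then (1 : ℤ) else 0).det)
      from rfl, RingHom.map_det]
  congr 1
  ext i j
  simp [Matrix.map_apply, apply_ite (Int.cast : ℤ → ℝ)]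

def t1d (a b c : Fin 6) : ℤ := (eZ a * (eZ b * eZ c - eZ c * eZ b)).trace

def t1T : Fin 6 → Fin 6 → Fin 6 → ℤ :=
  ![![![0, 0, 0, 0, 0, 0], ![0, 0, 2, 0, 0, 0], ![0, -2, 0, 0, 0, 0], ![0, 0, 0, 0, 0, 0], ![0, 0, 0, 0, 0, -2], ![0, 0, 0, 0, 2, 0]], ![![0, 0, -2, 0, 0, 0], ![0, 0, 0, 0, 0, 0], ![2, 0, 0, 0, 0, 0], ![0, 0, 0, 0, 0, 2], ![0, 0, 0, 0, 0, 0], ![0, 0, 0, -2, 0, 0]], ![![0, 2, 0, 0, 0, 0], ![-2, 0, 0, 0, 0, 0], ![0, 0, 0, 0, 0, 0], ![0, 0, 0, 0, -2, 0], ![0, 0, 0, 2, 0, 0], ![0, 0, 0, 0, 0, 0]], ![![0, 0, 0, 0, 0, 0], ![0, 0, 0, 0, 0, -2], ![0, 0, 0, 0, 2, 0], ![0, 0, 0, 0, 0, 0], ![0, 0, -2, 0, 0, 0], ![0, 2, 0, 0, 0, 0]], ![![0, 0, 0, 0, 0, 2], ![0, 0, 0, 0, 0, 0], ![0, 0, 0,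 -2, 0, 0], ![0, 0, 2, 0, 0, 0], ![0, 0, 0, 0, 0, 0], ![-2, 0, 0, 0, 0, 0]], ![![0, 0, 0, 0, -2, 0], ![0, 0, 0, 2, 0, 0], ![0, 0, 0, 0, 0, 0], ![0, -2, 0, 0, 0, 0], ![2, 0, 0, 0, 0, 0], ![0, 0, 0, 0, 0, 0]]]

def t2T : Fin 6 → Fin 6 → Fin 6 → ℤ :=
  ![![![0, 0, 0, 0, 0, 0], ![0, 0, 0, 0, 0, -2], ![0, 0, 0, 0, 2, 0], ![0, 0, 0, 0, 0, 0], ![0, 0, -2, 0, 0, 0], ![0, 2, 0, 0, 0, 0]], ![![0, 0, 0, 0, 0, 2], ![0, 0, 0, 0, 0, 0], ![0, 0, 0, -2, 0, 0], ![0, 0, 2, 0, 0, 0], ![0, 0, 0, 0, 0, 0], ![-2, 0, 0, 0, 0, 0]], ![![0, 0, 0, 0, -2, 0], ![0, 0, 0, 2, 0, 0], ![0, 0, 0, 0, 0, 0], ![0, -2, 0, 0, 0, 0], ![2, 0, 0, 0, 0, 0], ![0, 0, 0, 0, 0, 0]], ![![0, 0, 0, 0, 0, 0], ![0, 0, -2,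 0, 0, 0], ![0, 2, 0, 0, 0, 0], ![0, 0, 0, 0, 0, 0], ![0, 0, 0, 0, 0, 2], ![0, 0, 0, 0, -2, 0]], ![![0, 0, 2, 0, 0, 0], ![0, 0, 0, 0, 0, 0], ![-2, 0, 0, 0, 0, 0], ![0, 0, 0, 0, 0, -2], ![0, 0, 0, 0, 0, 0], ![0, 0, 0, 2, 0, 0]], ![![0, -2, 0, 0, 0, 0], ![2, 0, 0, 0, 0, 0], ![0, 0, 0, 0, 0, 0], ![0, 0, 0, 0, 2, 0], ![0, 0, 0, -2, 0, 0], ![0, 0, 0, 0, 0, 0]]]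

lemma t1d_eval : ∀ a b c : Fin 6, t1d a b c = t1T a b c := by decide

lemma T1e (a b c : Fin 6) : T1 (e a) (e b) (e c) = ((t1T a b c : ℤ) : ℝ) := by
  rw [← t1d_eval]
  show (eM a * (eM b * eM c - eM c * eM b)).trace = _
  rw [eM, eM, eM, ← mapZ_mul, ← mapZ_mul, ← mapZ_sub, ← mapZ_mul, mapZ_trace]
  rfl

def XT : Fin 6 → Matrix (Fin 4) (Fin 4) ℤ :=
  ![!![0, 0, 0, 0; 0, 0, 0, 0; 0, 0, 0, 1; 0, 0, -1, 0],
    !![0, 0, 0, 0; 0, 0, 0, -1; 0, 0, 0, 0; 0, 1, 0, 0],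
    !![0, 0, 0, 0; 0, 0, 1, 0; 0, -1, 0, 0; 0, 0, 0, 0],
    !![0, -1, 0, 0; 1, 0, 0, 0; 0, 0, 0, 0; 0, 0, 0, 0],
    !![0, 0, -1, 0; 0, 0, 0, 0; 1, 0, 0, 0; 0, 0, 0, 0],
    !![0, 0, 0, -1; 0, 0, 0, 0; 0, 0, 0, 0; 1, 0, 0, 0]]

def GT : Fin 6 → Fin 6 → Matrix (Fin 4) (Fin 4) ℤ :=
  ![![!![0, 0, 0, 0; 0, 0, 0, 0; 0, 0, 1, 0; 0, 0, 0, 1], !![0, 0, 0, 0; 0, 0, 0, 0; 0, -1, 0, 0; 0, 0, 0, 0], !![0, 0, 0, 0; 0, 0, 0, 0; 0, 0, 0, 0; 0, -1, 0, 0], !![0, 0, 0, 0; 0, 0, 0, 0; 0, 0, 0, 0; 0, 0, 0, 0], !![0, 0, 0, 0; 0, 0, 0, 0; 0, 0, 0, 0; 1, 0, 0, 0], !![0, 0, 0, 0; 0, 0, 0, 0; -1, 0, 0, 0; 0, 0, 0, 0]],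
    ![!![0, 0, 0, 0; 0, 0, -1, 0; 0, 0, 0, 0; 0, 0, 0, 0], !![0, 0, 0, 0; 0, 1, 0, 0; 0, 0, 0, 0; 0, 0, 0, 1], !![0, 0, 0, 0; 0, 0, 0, 0; 0, 0, 0, 0; 0, 0, -1, 0], !![0, 0, 0, 0; 0, 0, 0, 0; 0, 0, 0, 0; -1, 0, 0, 0], !![0, 0, 0, 0; 0, 0, 0, 0; 0, 0, 0, 0; 0, 0, 0, 0], !![0, 0, 0, 0; 1, 0, 0, 0; 0, 0, 0, 0; 0, 0, 0, 0]],
    ![!![0, 0, 0, 0; 0, 0, 0, -1; 0, 0, 0, 0; 0, 0, 0, 0], !![0, 0, 0, 0; 0, 0, 0, 0; 0, 0, 0, -1; 0, 0, 0, 0], !![0, 0, 0, 0; 0, 1, 0, 0; 0, 0, 1, 0; 0, 0, 0, 0], !![0, 0, 0, 0; 0, 0, 0, 0; 1, 0, 0, 0; 0, 0, 0, 0], !![0, 0, 0, 0; -1, 0, 0, 0; 0, 0, 0, 0; 0, 0, 0, 0], !![0, 0, 0, 0; 0, 0, 0, 0; 0, 0, 0, 0; 0, 0, 0, 0]],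
    ![!![0, 0, 0, 0; 0, 0, 0, 0; 0, 0, 0, 0; 0, 0, 0, 0], !![0, 0, 0, -1; 0, 0, 0, 0; 0, 0, 0, 0; 0, 0, 0, 0], !![0, 0, 1, 0; 0, 0, 0, 0; 0, 0, 0, 0; 0, 0, 0, 0], !![1, 0, 0, 0; 0, -1, 0, 0; 0, 0, 0, 0; 0, 0, 0, 0], !![0, 0, 0, 0; 0, 0, -1, 0; 0, 0, 0, 0; 0, 0, 0, 0], !![0, 0, 0, 0; 0, 0, 0, -1; 0, 0, 0, 0; 0, 0, 0, 0]],
    ![!![0, 0, 0, 1; 0, 0, 0, 0; 0, 0, 0, 0; 0, 0, 0, 0], !![0, 0, 0, 0; 0, 0, 0, 0; 0, 0, 0, 0; 0, 0, 0, 0], !![0, -1, 0, 0; 0, 0, 0, 0; 0, 0, 0, 0; 0, 0, 0, 0], !![0, 0, 0, 0; 0, 0, 0, 0; 0, -1, 0, 0; 0, 0, 0, 0], !![1, 0, 0, 0; 0, 0, 0, 0; 0, 0, -1, 0; 0, 0, 0, 0], !![0, 0, 0, 0; 0, 0, 0, 0; 0, 0, 0, -1; 0, 0, 0, 0]],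
    ![!![0, 0, -1, 0; 0, 0, 0, 0; 0, 0, 0, 0; 0, 0, 0, 0], !![0, 1, 0, 0; 0, 0, 0, 0; 0, 0, 0, 0; 0, 0, 0, 0], !![0, 0, 0, 0; 0, 0, 0, 0; 0, 0, 0, 0; 0, 0, 0, 0], !![0, 0, 0, 0; 0, 0, 0, 0; 0, 0, 0, 0; 0, -1, 0, 0], !![0, 0, 0, 0; 0, 0, 0, 0; 0, 0, 0, 0; 0, 0, -1, 0], !![1, 0, 0, 0; 0, 0, 0, 0; 0, 0, 0, 0; 0, 0, 0, -1]]]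

lemma XT_eval : ∀ k : Fin 6, etaZ * eZ k = XT k := by decide
lemma GT_eval : ∀ k l : Fin 6, (etaZ * eZ k) * etaZ * (etaZ * eZ l)ᵀ = GT k l := by decide

def t2d (a b c : Fin 6) : ℤ :=
  ∑ p, ∑ q, ∑ r, ∑ s, epsE p q r s * (XT a p q * GT b c r s)

set_option maxHeartbeats 4000000 in
lemma t2d_eval : ∀ a b c : Fin 6, t2d a b c = t2T a b c := by decide

lemma T2_re (A B C : so31) : T2 A B C = ∑ a, ∑ b, ∑ c, ∑ d,
    eps a b c d * ((eta * (A : Matrix (Fin 4) (Fin 4) ℝ)) a b *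
      (((eta * (B : Matrix (Fin 4) (Fin 4) ℝ)) * eta *
        (eta * (C : Matrix (Fin 4) (Fin 4) ℝ))ᵀ) c d)) := by
  rw [T2]
  set X := eta * (A : Matrix (Fin 4) (Fin 4) ℝ) with hX
  set Y := eta * (B : Matrix (Fin 4) (Fin 4) ℝ) with hY
  set Z := eta * (C : Matrix (Fin 4) (Fin 4) ℝ) with hZ
  refine Finset.sum_congr rfl fun a _ => ?_
  refine Finset.sum_congr rfl fun b _ => ?_
  refine Finset.sum_congr rfl fun c _ => ?_
  refine Finset.sum_congr rfl fun d _ => ?_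
  rw [Matrix.mul_apply]
  simp only [Matrix.mul_apply, Matrix.transpose_apply, Finset.sum_mul, Finset.mul_sum]
  rw [Finset.sum_comm]
  refine Finset.sum_congr rfl fun ee _ => ?_
  refine Finset.sum_congr rfl fun ff _ => ?_
  ring

lemma T2e (a b c : Fin 6) : T2 (e a) (e b) (e c) = ((t2T a b c : ℤ) : ℝ) := by
  rw [← t2d_eval, T2_re]
  have hX : ∀ k : Fin 6, eta * (e k : Matrix (Fin 4) (Fin 4) ℝ)
      = (XT k).map (Int.cast : ℤ → ℝ) := by
    intro k
    rw [eta_eq_map, ← XT_eval, mapZ_mul]; rfl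
  have hG : ∀ k l : Fin 6,
      (eta * (e k : Matrix (Fin 4) (Fin 4) ℝ)) * eta *
        (eta * (e l : Matrix (Fin 4) (Fin 4) ℝ))ᵀ
      = (GT k l).map (Int.cast : ℤ → ℝ) := by
    intro k l
    rw [hX, hX, eta_eq_map, ← GT_eval, XT_eval, XT_eval, mapZ_mul, mapZ_mul, mapZ_transpose]
  rw [t2d]
  push_cast
  refine Finset.sum_congr rfl fun p _ => ?_
  refine Finset.sum_congr rfl fun q _ => ?_
  refine Finset.sum_congr rfl fun r _ => ?_
  refine Finset.sum_congr rfl fun s _ => ?_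
  rw [eps_cast, hX, hG, Matrix.map_apply, Matrix.map_apply]
/-! ### The permutation sum -/

lemma perm_sum_succ {n : ℕ} {M : Type*} [AddCommMonoid M] (g : Equiv.Perm (Fin (n+1)) → M) :
    ∑ σ : Equiv.Perm (Fin (n+1)), g σ
      = ∑ i : Fin (n+1), ∑ τ : Equiv.Perm (Fin n), g (Equiv.Perm.decomposeFin.symm (i, τ)) := by
  rw [← Equiv.sum_comp Equiv.Perm.decomposeFin.symm g, Fintype.sum_prod_type]

set_option maxHeartbeats 4000000 in
lemma perm_sum_value :
    (∑ σ : Equiv.Perm (Fin 6), ((Equiv.Perm.sign σ : ℤ)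
      * (t1T (σ 0) (σ 1) (σ 2) * t2T (σ 3) (σ 4) (σ 5)))) = 576 := by
  simp only [perm_sum_succ]
  decide

lemma T1f_eval (x : Fin 3 → so31) : (fun y : Fin 3 → so31 => T1 (y 0) (y 1) (y 2)) x
    = T1 (x 0) (x 1) (x 2) := rfl

lemma wedge_e :
    wedge33 (fun y => T1 (y 0) (y 1) (y 2)) (fun y => T2 (y 0) (y 1) (y 2)) e = 16 := by
  rw [wedge33]
  have hsum : (∑ σ : Equiv.Perm (Fin 6),
      ((Equiv.Perm.sign σ : ℤ) : ℝ) *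
        (fun y : Fin 3 → so31 => T1 (y 0) (y 1) (y 2)) (fun i => e (σ (Fin.castAdd 3 i))) *
        (fun y : Fin 3 → so31 => T2 (y 0) (y 1) (y 2)) (fun i => e (σ (Fin.addNat i 3))))
      = ((∑ σ : Equiv.Perm (Fin 6), ((Equiv.Perm.sign σ : ℤ)
          * (t1T (σ 0) (σ 1) (σ 2) * t2T (σ 3) (σ 4) (σ 5))) : ℤ) : ℝ) := by
    push_cast
    refine Finset.sum_congr rfl fun σ _ => ?_
    show ((Equiv.Perm.sign σ : ℤ) : ℝ)
        * T1 (e (σ (Fin.castAdd 3 0))) (e (σ (Fin.castAdd 3 1))) (e (σ (Fin.castAdd 3 2)))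
        * T2 (e (σ (Fin.addNat 0 3))) (e (σ (Fin.addNat 1 3))) (e (σ (Fin.addNat 2 3))) = _
    rw [show Fin.castAdd 3 (0 : Fin 3) = (0 : Fin 6) from rfl,
      show Fin.castAdd 3 (1 : Fin 3) = (1 : Fin 6) from rfl,
      show Fin.castAdd 3 (2 : Fin 3) = (2 : Fin 6) from rfl,
      show Fin.addNat (0 : Fin 3) 3 = (3 : Fin 6) from rfl,
      show Fin.addNat (1 : Fin 3) 3 = (4 : Fin 6) from rfl,
      show Fin.addNat (2 : Fin 3) 3 = (5 : Fin 6) from rfl,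
      T1e, T2e]
    ring
  rw [hsum, perm_sum_value]
  norm_num

/-! ### Alternation -/

lemma wedge_alt (f h : (Fin 3 → so31) → ℝ) (x : Fin 6 → so31) (i j : Fin 6)
    (hij : i ≠ j) (hx : x i = x j) : wedge33 f h x = 0 := by
  rw [wedge33]
  set g : Equiv.Perm (Fin 6) → ℝ := fun σ =>
    ((Equiv.Perm.sign σ : ℤ) : ℝ) * f (fun t => x (σ (Fin.castAdd 3 t))) *
      h (fun t => x (σ (Fin.addNat t 3))) with hg
  have hxswap : ∀ m : Fin 6, x (Equiv.swap i j m) = x m := by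
    intro m
    rcases eq_or_ne m i with rfl | hmi
    · rw [Equiv.swap_apply_left]; exact hx.symm
    rcases eq_or_ne m j with rfl | hmj
    · rw [Equiv.swap_apply_right]; exact hx
    · rw [Equiv.swap_apply_of_ne_of_ne hmi hmj]
  have hneg : ∀ σ : Equiv.Perm (Fin 6), g (Equiv.swap i j * σ) = -g σ := by
    intro σ
    rw [hg]
    simp only
    rw [Equiv.Perm.sign_mul, Equiv.Perm.sign_swap hij]
    have h1 : (fun t : Fin 3 => x ((Equiv.swap i j * σ) (Fin.castAdd 3 t)))
        = fun t : Fin 3 => x (σ (Fin.castAdd 3 t)) := by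
      funext t; rw [Equiv.Perm.mul_apply, hxswap]
    have h2 : (fun t : Fin 3 => x ((Equiv.swap i j * σ) (Fin.addNat t 3)))
        = fun t : Fin 3 => x (σ (Fin.addNat t 3)) := by
      funext t; rw [Equiv.Perm.mul_apply, hxswap]
    rw [h1, h2]
    push_cast [Units.val_mul]
    ring
  have hcomp := Equiv.sum_comp (Equiv.mulLeft (Equiv.swap i j)) g
  have : (∑ σ : Equiv.Perm (Fin 6), g (Equiv.mulLeft (Equiv.swap i j) σ))
      = -∑ σ : Equiv.Perm (Fin 6), g σ := by
    rw [← Finset.sum_neg_distrib]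
    exact Finset.sum_congr rfl fun σ _ => by
      rw [show Equiv.mulLeft (Equiv.swap i j) σ = Equiv.swap i j * σ from rfl, hneg]
  rw [this] at hcomp
  have hzero : (∑ σ : Equiv.Perm (Fin 6), g σ) = 0 := by linarith
  rw [hzero, mul_zero]

/-! ### Brackets of basis elements -/

lemma brkt (i j k : Fin 6) (c : ℤ) (h : eZ i * eZ j - eZ j * eZ i = c • eZ k) :
    ⁅e i, e j⁆ = ((c : ℝ)) • e k := by
  apply Subtype.ext
  rw [LieSubalgebra.coe_bracket, coe_smul']
  show (e i : Matrix (Fin 4) (Fin 4) ℝ) * (e j : Matrix (Fin 4) (Fin 4) ℝ)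
      - (e j : Matrix (Fin 4) (Fin 4) ℝ) * (e i : Matrix (Fin 4) (Fin 4) ℝ)
      = (c : ℝ) • (e k : Matrix (Fin 4) (Fin 4) ℝ)
  show eM i * eM j - eM j * eM i = (c : ℝ) • eM k
  rw [eM, eM, eM, ← mapZ_mul, ← mapZ_mul, ← mapZ_sub, h]
  ext p q
  simp only [Matrix.map_apply, Matrix.smul_apply, smul_eq_mul]
  push_cast
  ring

lemma b_zero (b : AlternatingMap ℝ so31 ℝ (Fin 5)) (z w : so31) (c : ℝ)
    (tail : Fin 4 → so31) (t0 : Fin 4) (hz : z = c • w) (ht : tail t0 = w) :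
    b (Fin.cons z tail) = 0 := by
  subst ht
  subst hz
  have h1 : (Fin.cons (c • tail t0) tail : Fin 5 → so31)
      = Function.update (Fin.cons (tail t0) tail : Fin 5 → so31) 0 (c • tail t0) := by
    rw [Fin.update_cons_zero]
  rw [h1, b.map_update_smul, Fin.update_cons_zero]
  have h2 : b (Fin.cons (tail t0) tail) = 0 := by
    refine b.map_eq_zero_of_eq _ (i := 0) (j := t0.succ) ?_ (Fin.succ_ne_zero t0).symm
    rw [Fin.cons_zero, Fin.cons_succ]
  rw [h2, smul_zero]
/-! ### ceDiff of any alternating 5-form vanishes on the basis tuple -/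

lemma brkt0 (i j : Fin 6) (h : eZ i * eZ j - eZ j * eZ i = 0) (w : so31) :
    ⁅e i, e j⁆ = (0 : ℝ) • w := by
  rw [zero_smul]
  apply Subtype.ext
  rw [LieSubalgebra.coe_bracket, ZeroMemClass.coe_zero]
  show eM i * eM j - eM j * eM i = 0
  rw [eM, eM, ← mapZ_mul, ← mapZ_mul, ← mapZ_sub, h]
  ext p q
  simp [Matrix.map_apply]

lemma key (b : AlternatingMap ℝ so31 ℝ (Fin 5)) (i j : Fin 6) (hij : i < j)
    (hi : (i : ℕ) < 5) :
    b (Fin.cons ⁅e i, e j⁆ fun t : Fin 4 =>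
        e (j.succAbove ((⟨(i : ℕ), hi⟩ : Fin 5).succAbove t))) = 0 := by
  fin_cases i <;> fin_cases j
  · exact absurd hij (by decide)
  · exact b_zero b _ _ _ _ (0 : Fin 4) (brkt 0 1 2 (-1) (by decide)) rfl
  · exact b_zero b _ _ _ _ (0 : Fin 4) (brkt 0 2 1 1 (by decide)) rfl
  · exact b_zero b _ _ _ _ (0 : Fin 4) (brkt0 0 3 (by decide) _) rfl
  · exact b_zero b _ _ _ _ (3 : Fin 4) (brkt 0 4 5 (-1) (by decide)) rfl
  · exact b_zero b _ _ _ _ (3 : Fin 4) (brkt 0 5 4 1 (by decide)) rfl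
  · exact absurd hij (by decide)
  · exact absurd hij (by decide)
  · exact b_zero b _ _ _ _ (0 : Fin 4) (brkt 1 2 0 (-1) (by decide)) rfl
  · exact b_zero b _ _ _ _ (3 : Fin 4) (brkt 1 3 5 1 (by decide)) rfl
  · exact b_zero b _ _ _ _ (0 : Fin 4) (brkt0 1 4 (by decide) _) rfl
  · exact b_zero b _ _ _ _ (2 : Fin 4) (brkt 1 5 3 (-1) (by decide)) rfl
  · exact absurd hij (by decide)
  · exact absurd hij (by decide)
  · exact absurd hij (by decide)
  · exact b_zero b _ _ _ _ (2 : Fin 4) (brkt 2 3 4 (-1) (by decide)) rfl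
  · exact b_zero b _ _ _ _ (2 : Fin 4) (brkt 2 4 3 1 (by decide)) rfl
  · exact b_zero b _ _ _ _ (0 : Fin 4) (brkt0 2 5 (by decide) _) rfl
  · exact absurd hij (by decide)
  · exact absurd hij (by decide)
  · exact absurd hij (by decide)
  · exact absurd hij (by decide)
  · exact b_zero b _ _ _ _ (2 : Fin 4) (brkt 3 4 2 1 (by decide)) rfl
  · exact b_zero b _ _ _ _ (1 : Fin 4) (brkt 3 5 1 (-1) (by decide)) rfl
  · exact absurd hij (by decide)
  · exact absurd hij (by decide)
  · exact absurd hij (by decide)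
  · exact absurd hij (by decide)
  · exact absurd hij (by decide)
  · exact b_zero b _ _ _ _ (0 : Fin 4) (brkt 4 5 0 1 (by decide)) rfl
  · exact absurd hij (by decide)
  · exact absurd hij (by decide)
  · exact absurd hij (by decide)
  · exact absurd hij (by decide)
  · exact absurd hij (by decide)
  · exact absurd hij (by decide)

lemma ceDiff_e (b : AlternatingMap ℝ so31 ℝ (Fin 5)) : ceDiff (⇑b) e = 0 := by
  simp only [ceDiff]
  refine Finset.sum_eq_zero fun i _ => Finset.sum_eq_zero fun j _ => ?_
  by_cases hij : i < j
  · rw [dif_pos hij]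
    exact mul_eq_zero_of_right _ (key b i j hij _)
  · rw [dif_neg hij]

/-! ### Main theorem -/

/-- the wedge product `T₁ ∧ T₂` is a nonzero alternating 6-linear form
on the 6-dimensional Lie algebra `so(3,1)` and is not a Chevalley–Eilenberg
6-coboundary; hence it represents a nontrivial class in `H⁶(so(3,1);ℝ)`. -/
theorem wedge_T1_T2_nontrivial_in_degree_six :
    Module.finrank ℝ so31 = 6 ∧
    (∃ x : Fin 6 → so31,
      wedge33 (fun y => T1 (y 0) (y 1) (y 2)) (fun y => T2 (y 0) (y 1) (y 2)) x ≠ 0) ∧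
    (∀ (x : Fin 6 → so31) (i j : Fin 6), i ≠ j → x i = x j →
      wedge33 (fun y => T1 (y 0) (y 1) (y 2)) (fun y => T2 (y 0) (y 1) (y 2)) x = 0) ∧
    ¬ ∃ b : AlternatingMap ℝ so31 ℝ (Fin 5),
        ∀ x : Fin 6 → so31,
          wedge33 (fun y => T1 (y 0) (y 1) (y 2)) (fun y => T2 (y 0) (y 1) (y 2)) x
            = ceDiff (⇑b) x := by
  refine ⟨finrank_so31, ⟨e, ?_⟩,
    fun x i j hij hx => wedge_alt _ _ x i j hij hx, ?_⟩
  · rw [wedge_e]; norm_num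
  · rintro ⟨b, hb⟩
    have h := hb e
    rw [wedge_e, ceDiff_e b] at h
    norm_num at h
end
end

section
/- The real vector space of ad-invariant symmetric bilinear forms on so(3,1) — that is, symmetric bilinear forms B : so(3,1)² → ℝ satisfying B([X,Y],Z) + B(Y,[X,Z]) = 0 for all X, Y, Z ∈ so(3,1) — is two-dimensional, spanned by B₁(A,B) = tr(AB) and B₂(A,B) = Σ_{a,b,c,d} ε^{abcd} (ηA)_{ab} (ηB)_{cd}. -/
open Matrix

attribute [local instance 100] LieRing.ofAssociativeRing

noncomputable section
set_option maxHeartbeats 1600000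

/-- The symmetric bilinear form `B₁(A,B) = tr(AB)` on `so(3,1)`. -/
def B1 (A B : so31) : ℝ :=
  Matrix.trace ((A : Matrix (Fin 4) (Fin 4) ℝ) * (B : Matrix (Fin 4) (Fin 4) ℝ))

/-- The symmetric bilinear form `B₂(A,B) = Σ_{a,b,c,d} ε^{abcd} (ηA)_{ab} (ηB)_{cd}`
on `so(3,1)`. -/
def B2 (A B : so31) : ℝ :=
  ∑ a, ∑ b, ∑ c, ∑ d,
    eps a b c d * (eta * (A : Matrix (Fin 4) (Fin 4) ℝ)) a b *
      (eta * (B : Matrix (Fin 4) (Fin 4) ℝ)) c d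

/-! ### Auxiliary machinery -/

lemma det_fin_four' (A : Matrix (Fin 4) (Fin 4) ℝ) : A.det =
    A 0 0*(A 1 1*(A 2 2*A 3 3 - A 2 3*A 3 2) - A 1 2*(A 2 1*A 3 3 - A 2 3*A 3 1) + A 1 3*(A 2 1*A 3 2 - A 2 2*A 3 1))
  - A 0 1*(A 1 0*(A 2 2*A 3 3 - A 2 3*A 3 2) - A 1 2*(A 2 0*A 3 3 - A 2 3*A 3 0) + A 1 3*(A 2 0*A 3 2 - A 2 2*A 3 0))
  + A 0 2*(A 1 0*(A 2 1*A 3 3 - A 2 3*A 3 1) - A 1 1*(A 2 0*A 3 3 - A 2 3*A 3 0) + A 1 3*(A 2 0*A 3 1 - A 2 1*A 3 0))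
  - A 0 3*(A 1 0*(A 2 1*A 3 2 - A 2 2*A 3 1) - A 1 1*(A 2 0*A 3 2 - A 2 2*A 3 0) + A 1 2*(A 2 0*A 3 1 - A 2 1*A 3 0)) := by
  rw [Matrix.det_succ_row_zero]
  simp [Fin.sum_univ_succ, Matrix.det_fin_three, Matrix.submatrix_apply, Fin.succAbove,
    show (Fin.succ 2 : Fin 4) = 3 from rfl, show (Fin.castSucc 2 : Fin 4) = 2 from rfl,
    show ((1:Fin 4) < 3) from by decide]
  ring

lemma mem_so31 (A : Matrix (Fin 4) (Fin 4) ℝ) (h : Aᵀ * eta = eta * (-A)) : A ∈ so31 := by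
  rw [so31, mem_skewAdjointMatricesLieSubalgebra, mem_skewAdjointMatricesSubmodule]
  exact h

lemma so31_eqn (X : so31) : (X : Matrix (Fin 4) (Fin 4) ℝ)ᵀ * eta =
    eta * (-(X : Matrix (Fin 4) (Fin 4) ℝ)) := by
  have h : (X : Matrix (Fin 4) (Fin 4) ℝ) ∈ skewAdjointMatricesLieSubalgebra eta := X.2
  rw [mem_skewAdjointMatricesLieSubalgebra, mem_skewAdjointMatricesSubmodule] at h
  exact h
def mJ1 : Matrix (Fin 4) (Fin 4) ℝ := !![0, 0, 0, 0; 0, 0, 0, 0; 0, 0, 0, -1; 0, 0, 1, 0]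
def mJ2 : Matrix (Fin 4) (Fin 4) ℝ := !![0, 0, 0, 0; 0, 0, 0, 1; 0, 0, 0, 0; 0, -1, 0, 0]
def mJ3 : Matrix (Fin 4) (Fin 4) ℝ := !![0, 0, 0, 0; 0, 0, -1, 0; 0, 1, 0, 0; 0, 0, 0, 0]
def mK1 : Matrix (Fin 4) (Fin 4) ℝ := !![0, 1, 0, 0; 1, 0, 0, 0; 0, 0, 0, 0; 0, 0, 0, 0]
def mK2 : Matrix (Fin 4) (Fin 4) ℝ := !![0, 0, 1, 0; 0, 0, 0, 0; 1, 0, 0, 0; 0, 0, 0, 0]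
def mK3 : Matrix (Fin 4) (Fin 4) ℝ := !![0, 0, 0, 1; 0, 0, 0, 0; 0, 0, 0, 0; 1, 0, 0, 0]
lemma hJ1 : mJ1 ∈ so31 := by
  apply mem_so31
  ext i j
  fin_cases i <;> fin_cases j <;>
    simp [mJ1, eta, Matrix.mul_apply, Fin.sum_univ_four, Matrix.transpose,
      Matrix.vecHead, Matrix.vecTail]
lemma hJ2 : mJ2 ∈ so31 := by
  apply mem_so31
  ext i j
  fin_cases i <;> fin_cases j <;>
    simp [mJ2, eta, Matrix.mul_apply, Fin.sum_univ_four, Matrix.transpose,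
      Matrix.vecHead, Matrix.vecTail]
lemma hJ3 : mJ3 ∈ so31 := by
  apply mem_so31
  ext i j
  fin_cases i <;> fin_cases j <;>
    simp [mJ3, eta, Matrix.mul_apply, Fin.sum_univ_four, Matrix.transpose,
      Matrix.vecHead, Matrix.vecTail]
lemma hK1 : mK1 ∈ so31 := by
  apply mem_so31
  ext i j
  fin_cases i <;> fin_cases j <;>
    simp [mK1, eta, Matrix.mul_apply, Fin.sum_univ_four, Matrix.transpose,
      Matrix.vecHead, Matrix.vecTail]
lemma hK2 : mK2 ∈ so31 := by
  apply mem_so31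
  ext i j
  fin_cases i <;> fin_cases j <;>
    simp [mK2, eta, Matrix.mul_apply, Fin.sum_univ_four, Matrix.transpose,
      Matrix.vecHead, Matrix.vecTail]
lemma hK3 : mK3 ∈ so31 := by
  apply mem_so31
  ext i j
  fin_cases i <;> fin_cases j <;>
    simp [mK3, eta, Matrix.mul_apply, Fin.sum_univ_four, Matrix.transpose,
      Matrix.vecHead, Matrix.vecTail]
def EJ1 : so31 := ⟨mJ1, hJ1⟩
def EJ2 : so31 := ⟨mJ2, hJ2⟩
def EJ3 : so31 := ⟨mJ3, hJ3⟩
def EK1 : so31 := ⟨mK1, hK1⟩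
def EK2 : so31 := ⟨mK2, hK2⟩
def EK3 : so31 := ⟨mK3, hK3⟩
@[simp] lemma coe_EJ1 : (EJ1 : Matrix (Fin 4) (Fin 4) ℝ) = mJ1 := rfl
@[simp] lemma coe_EJ2 : (EJ2 : Matrix (Fin 4) (Fin 4) ℝ) = mJ2 := rfl
@[simp] lemma coe_EJ3 : (EJ3 : Matrix (Fin 4) (Fin 4) ℝ) = mJ3 := rfl
@[simp] lemma coe_EK1 : (EK1 : Matrix (Fin 4) (Fin 4) ℝ) = mK1 := rfl
@[simp] lemma coe_EK2 : (EK2 : Matrix (Fin 4) (Fin 4) ℝ) = mK2 := rfl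
@[simp] lemma coe_EK3 : (EK3 : Matrix (Fin 4) (Fin 4) ℝ) = mK3 := rfl
@[simp] lemma coe_smul_so31 (c : ℝ) (X : so31) :
    ((c • X : so31) : Matrix (Fin 4) (Fin 4) ℝ) = c • (X : Matrix (Fin 4) (Fin 4) ℝ) := rfl
@[simp] lemma coe_add_so31 (X Y : so31) :
    ((X + Y : so31) : Matrix (Fin 4) (Fin 4) ℝ)
      = (X : Matrix (Fin 4) (Fin 4) ℝ) + (Y : Matrix (Fin 4) (Fin 4) ℝ) := rfl
@[simp] lemma coe_neg_so31 (X : so31) :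
    ((-X : so31) : Matrix (Fin 4) (Fin 4) ℝ) = -(X : Matrix (Fin 4) (Fin 4) ℝ) := rfl

lemma decomp (X : so31) : ∃ a1 a2 a3 a4 a5 a6 : ℝ,
    X = a1 • EJ1 + a2 • EJ2 + a3 • EJ3 + a4 • EK1 + a5 • EK2 + a6 • EK3 := by
  have hM := so31_eqn X
  set M := (X : Matrix (Fin 4) (Fin 4) ℝ) with hMdef
  have H : ∀ a b : Fin 4, M b a * (![-1,1,1,1] : Fin 4 → ℝ) b
      = (![-1,1,1,1] : Fin 4 → ℝ) a * (-M) a b := by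
    intro a b
    have h := congrFun (congrFun hM a) b
    simpa [eta, Matrix.mul_diagonal, Matrix.diagonal_mul, Matrix.transpose_apply] using h
  have hd0 := H 0 0; have hd1 := H 1 1; have hd2 := H 2 2; have hd3 := H 3 3
  have h01 := H 0 1; have h02 := H 0 2; have h03 := H 0 3
  have h23 := H 2 3; have h31 := H 3 1; have h12 := H 1 2
  norm_num [Matrix.vecHead, Matrix.vecTail, Matrix.neg_apply, Matrix.cons_val_two, Matrix.cons_val_three]
    at hd0 hd1 hd2 hd3 h01 h02 h03 h23 h31 h12
  refine ⟨M 3 2, M 1 3, M 2 1, M 1 0, M 2 0, M 3 0, ?_⟩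
  apply Subtype.ext
  have hcoe : ∀ a1 a2 a3 a4 a5 a6 : ℝ,
      ((a1 • EJ1 + a2 • EJ2 + a3 • EJ3 + a4 • EK1 + a5 • EK2 + a6 • EK3 : so31) :
        Matrix (Fin 4) (Fin 4) ℝ)
      = a1 • mJ1 + a2 • mJ2 + a3 • mJ3 + a4 • mK1 + a5 • mK2 + a6 • mK3 := fun _ _ _ _ _ _ => rfl
  rw [hcoe]
  show M = _
  ext i j
  fin_cases i <;> fin_cases j <;>
    simp [mJ1, mJ2, mJ3, mK1, mK2, mK3, Matrix.add_apply, Matrix.smul_apply,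
      smul_eq_mul, Matrix.vecHead, Matrix.vecTail] <;>
    try linarith

/-! ### Bracket table -/
lemma br_J1_J1 : ⁅EJ1, EJ1⁆ = 0 := by
  apply Subtype.ext
  rw [LieSubalgebra.coe_bracket, Ring.lie_def]
  push_cast
  ext i j
  fin_cases i <;> fin_cases j <;>
    simp [mJ1, mJ2, mJ3, mK1, mK2, mK3, Matrix.mul_apply, Fin.sum_univ_four,
      Matrix.vecHead, Matrix.vecTail] <;> try norm_num
lemma br_J1_J2 : ⁅EJ1, EJ2⁆ = EJ3 := by
  apply Subtype.ext
  rw [LieSubalgebra.coe_bracket, Ring.lie_def]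
  push_cast
  ext i j
  fin_cases i <;> fin_cases j <;>
    simp [mJ1, mJ2, mJ3, mK1, mK2, mK3, Matrix.mul_apply, Fin.sum_univ_four,
      Matrix.vecHead, Matrix.vecTail] <;> try norm_num
lemma br_J1_J3 : ⁅EJ1, EJ3⁆ = -EJ2 := by
  apply Subtype.ext
  rw [LieSubalgebra.coe_bracket, Ring.lie_def]
  push_cast
  ext i j
  fin_cases i <;> fin_cases j <;>
    simp [mJ1, mJ2, mJ3, mK1, mK2, mK3, Matrix.mul_apply, Fin.sum_univ_four,
      Matrix.vecHead, Matrix.vecTail] <;> try norm_num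
lemma br_J1_K1 : ⁅EJ1, EK1⁆ = 0 := by
  apply Subtype.ext
  rw [LieSubalgebra.coe_bracket, Ring.lie_def]
  push_cast
  ext i j
  fin_cases i <;> fin_cases j <;>
    simp [mJ1, mJ2, mJ3, mK1, mK2, mK3, Matrix.mul_apply, Fin.sum_univ_four,
      Matrix.vecHead, Matrix.vecTail] <;> try norm_num
lemma br_J1_K2 : ⁅EJ1, EK2⁆ = EK3 := by
  apply Subtype.ext
  rw [LieSubalgebra.coe_bracket, Ring.lie_def]
  push_cast
  ext i j
  fin_cases i <;> fin_cases j <;>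
    simp [mJ1, mJ2, mJ3, mK1, mK2, mK3, Matrix.mul_apply, Fin.sum_univ_four,
      Matrix.vecHead, Matrix.vecTail] <;> try norm_num
lemma br_J1_K3 : ⁅EJ1, EK3⁆ = -EK2 := by
  apply Subtype.ext
  rw [LieSubalgebra.coe_bracket, Ring.lie_def]
  push_cast
  ext i j
  fin_cases i <;> fin_cases j <;>
    simp [mJ1, mJ2, mJ3, mK1, mK2, mK3, Matrix.mul_apply, Fin.sum_univ_four,
      Matrix.vecHead, Matrix.vecTail] <;> try norm_num
lemma br_J2_J1 : ⁅EJ2, EJ1⁆ = -EJ3 := by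
  apply Subtype.ext
  rw [LieSubalgebra.coe_bracket, Ring.lie_def]
  push_cast
  ext i j
  fin_cases i <;> fin_cases j <;>
    simp [mJ1, mJ2, mJ3, mK1, mK2, mK3, Matrix.mul_apply, Fin.sum_univ_four,
      Matrix.vecHead, Matrix.vecTail] <;> try norm_num
lemma br_J2_J2 : ⁅EJ2, EJ2⁆ = 0 := by
  apply Subtype.ext
  rw [LieSubalgebra.coe_bracket, Ring.lie_def]
  push_cast
  ext i j
  fin_cases i <;> fin_cases j <;>
    simp [mJ1, mJ2, mJ3, mK1, mK2, mK3, Matrix.mul_apply, Fin.sum_univ_four,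
      Matrix.vecHead, Matrix.vecTail] <;> try norm_num
lemma br_J2_J3 : ⁅EJ2, EJ3⁆ = EJ1 := by
  apply Subtype.ext
  rw [LieSubalgebra.coe_bracket, Ring.lie_def]
  push_cast
  ext i j
  fin_cases i <;> fin_cases j <;>
    simp [mJ1, mJ2, mJ3, mK1, mK2, mK3, Matrix.mul_apply, Fin.sum_univ_four,
      Matrix.vecHead, Matrix.vecTail] <;> try norm_num
lemma br_J2_K1 : ⁅EJ2, EK1⁆ = -EK3 := by
  apply Subtype.ext
  rw [LieSubalgebra.coe_bracket, Ring.lie_def]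
  push_cast
  ext i j
  fin_cases i <;> fin_cases j <;>
    simp [mJ1, mJ2, mJ3, mK1, mK2, mK3, Matrix.mul_apply, Fin.sum_univ_four,
      Matrix.vecHead, Matrix.vecTail] <;> try norm_num
lemma br_J2_K2 : ⁅EJ2, EK2⁆ = 0 := by
  apply Subtype.ext
  rw [LieSubalgebra.coe_bracket, Ring.lie_def]
  push_cast
  ext i j
  fin_cases i <;> fin_cases j <;>
    simp [mJ1, mJ2, mJ3, mK1, mK2, mK3, Matrix.mul_apply, Fin.sum_univ_four,
      Matrix.vecHead, Matrix.vecTail] <;> try norm_num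
lemma br_J2_K3 : ⁅EJ2, EK3⁆ = EK1 := by
  apply Subtype.ext
  rw [LieSubalgebra.coe_bracket, Ring.lie_def]
  push_cast
  ext i j
  fin_cases i <;> fin_cases j <;>
    simp [mJ1, mJ2, mJ3, mK1, mK2, mK3, Matrix.mul_apply, Fin.sum_univ_four,
      Matrix.vecHead, Matrix.vecTail] <;> try norm_num
lemma br_J3_J1 : ⁅EJ3, EJ1⁆ = EJ2 := by
  apply Subtype.ext
  rw [LieSubalgebra.coe_bracket, Ring.lie_def]
  push_cast
  ext i j
  fin_cases i <;> fin_cases j <;>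
    simp [mJ1, mJ2, mJ3, mK1, mK2, mK3, Matrix.mul_apply, Fin.sum_univ_four,
      Matrix.vecHead, Matrix.vecTail] <;> try norm_num
lemma br_J3_J2 : ⁅EJ3, EJ2⁆ = -EJ1 := by
  apply Subtype.ext
  rw [LieSubalgebra.coe_bracket, Ring.lie_def]
  push_cast
  ext i j
  fin_cases i <;> fin_cases j <;>
    simp [mJ1, mJ2, mJ3, mK1, mK2, mK3, Matrix.mul_apply, Fin.sum_univ_four,
      Matrix.vecHead, Matrix.vecTail] <;> try norm_num
lemma br_J3_J3 : ⁅EJ3, EJ3⁆ = 0 := by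
  apply Subtype.ext
  rw [LieSubalgebra.coe_bracket, Ring.lie_def]
  push_cast
  ext i j
  fin_cases i <;> fin_cases j <;>
    simp [mJ1, mJ2, mJ3, mK1, mK2, mK3, Matrix.mul_apply, Fin.sum_univ_four,
      Matrix.vecHead, Matrix.vecTail] <;> try norm_num
lemma br_J3_K1 : ⁅EJ3, EK1⁆ = EK2 := by
  apply Subtype.ext
  rw [LieSubalgebra.coe_bracket, Ring.lie_def]
  push_cast
  ext i j
  fin_cases i <;> fin_cases j <;>
    simp [mJ1, mJ2, mJ3, mK1, mK2, mK3, Matrix.mul_apply, Fin.sum_univ_four,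
      Matrix.vecHead, Matrix.vecTail] <;> try norm_num
lemma br_J3_K2 : ⁅EJ3, EK2⁆ = -EK1 := by
  apply Subtype.ext
  rw [LieSubalgebra.coe_bracket, Ring.lie_def]
  push_cast
  ext i j
  fin_cases i <;> fin_cases j <;>
    simp [mJ1, mJ2, mJ3, mK1, mK2, mK3, Matrix.mul_apply, Fin.sum_univ_four,
      Matrix.vecHead, Matrix.vecTail] <;> try norm_num
lemma br_J3_K3 : ⁅EJ3, EK3⁆ = 0 := by
  apply Subtype.ext
  rw [LieSubalgebra.coe_bracket, Ring.lie_def]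
  push_cast
  ext i j
  fin_cases i <;> fin_cases j <;>
    simp [mJ1, mJ2, mJ3, mK1, mK2, mK3, Matrix.mul_apply, Fin.sum_univ_four,
      Matrix.vecHead, Matrix.vecTail] <;> try norm_num
lemma br_K1_J1 : ⁅EK1, EJ1⁆ = 0 := by
  apply Subtype.ext
  rw [LieSubalgebra.coe_bracket, Ring.lie_def]
  push_cast
  ext i j
  fin_cases i <;> fin_cases j <;>
    simp [mJ1, mJ2, mJ3, mK1, mK2, mK3, Matrix.mul_apply, Fin.sum_univ_four,
      Matrix.vecHead, Matrix.vecTail] <;> try norm_num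
lemma br_K1_J2 : ⁅EK1, EJ2⁆ = EK3 := by
  apply Subtype.ext
  rw [LieSubalgebra.coe_bracket, Ring.lie_def]
  push_cast
  ext i j
  fin_cases i <;> fin_cases j <;>
    simp [mJ1, mJ2, mJ3, mK1, mK2, mK3, Matrix.mul_apply, Fin.sum_univ_four,
      Matrix.vecHead, Matrix.vecTail] <;> try norm_num
lemma br_K1_J3 : ⁅EK1, EJ3⁆ = -EK2 := by
  apply Subtype.ext
  rw [LieSubalgebra.coe_bracket, Ring.lie_def]
  push_cast
  ext i j
  fin_cases i <;> fin_cases j <;>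
    simp [mJ1, mJ2, mJ3, mK1, mK2, mK3, Matrix.mul_apply, Fin.sum_univ_four,
      Matrix.vecHead, Matrix.vecTail] <;> try norm_num
lemma br_K1_K1 : ⁅EK1, EK1⁆ = 0 := by
  apply Subtype.ext
  rw [LieSubalgebra.coe_bracket, Ring.lie_def]
  push_cast
  ext i j
  fin_cases i <;> fin_cases j <;>
    simp [mJ1, mJ2, mJ3, mK1, mK2, mK3, Matrix.mul_apply, Fin.sum_univ_four,
      Matrix.vecHead, Matrix.vecTail] <;> try norm_num
lemma br_K1_K2 : ⁅EK1, EK2⁆ = -EJ3 := by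
  apply Subtype.ext
  rw [LieSubalgebra.coe_bracket, Ring.lie_def]
  push_cast
  ext i j
  fin_cases i <;> fin_cases j <;>
    simp [mJ1, mJ2, mJ3, mK1, mK2, mK3, Matrix.mul_apply, Fin.sum_univ_four,
      Matrix.vecHead, Matrix.vecTail] <;> try norm_num
lemma br_K1_K3 : ⁅EK1, EK3⁆ = EJ2 := by
  apply Subtype.ext
  rw [LieSubalgebra.coe_bracket, Ring.lie_def]
  push_cast
  ext i j
  fin_cases i <;> fin_cases j <;>
    simp [mJ1, mJ2, mJ3, mK1, mK2, mK3, Matrix.mul_apply, Fin.sum_univ_four,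
      Matrix.vecHead, Matrix.vecTail] <;> try norm_num
lemma br_K2_J1 : ⁅EK2, EJ1⁆ = -EK3 := by
  apply Subtype.ext
  rw [LieSubalgebra.coe_bracket, Ring.lie_def]
  push_cast
  ext i j
  fin_cases i <;> fin_cases j <;>
    simp [mJ1, mJ2, mJ3, mK1, mK2, mK3, Matrix.mul_apply, Fin.sum_univ_four,
      Matrix.vecHead, Matrix.vecTail] <;> try norm_num
lemma br_K2_J2 : ⁅EK2, EJ2⁆ = 0 := by
  apply Subtype.ext
  rw [LieSubalgebra.coe_bracket, Ring.lie_def]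
  push_cast
  ext i j
  fin_cases i <;> fin_cases j <;>
    simp [mJ1, mJ2, mJ3, mK1, mK2, mK3, Matrix.mul_apply, Fin.sum_univ_four,
      Matrix.vecHead, Matrix.vecTail] <;> try norm_num
lemma br_K2_J3 : ⁅EK2, EJ3⁆ = EK1 := by
  apply Subtype.ext
  rw [LieSubalgebra.coe_bracket, Ring.lie_def]
  push_cast
  ext i j
  fin_cases i <;> fin_cases j <;>
    simp [mJ1, mJ2, mJ3, mK1, mK2, mK3, Matrix.mul_apply, Fin.sum_univ_four,
      Matrix.vecHead, Matrix.vecTail] <;> try norm_num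
lemma br_K2_K1 : ⁅EK2, EK1⁆ = EJ3 := by
  apply Subtype.ext
  rw [LieSubalgebra.coe_bracket, Ring.lie_def]
  push_cast
  ext i j
  fin_cases i <;> fin_cases j <;>
    simp [mJ1, mJ2, mJ3, mK1, mK2, mK3, Matrix.mul_apply, Fin.sum_univ_four,
      Matrix.vecHead, Matrix.vecTail] <;> try norm_num
lemma br_K2_K2 : ⁅EK2, EK2⁆ = 0 := by
  apply Subtype.ext
  rw [LieSubalgebra.coe_bracket, Ring.lie_def]
  push_cast
  ext i j
  fin_cases i <;> fin_cases j <;>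
    simp [mJ1, mJ2, mJ3, mK1, mK2, mK3, Matrix.mul_apply, Fin.sum_univ_four,
      Matrix.vecHead, Matrix.vecTail] <;> try norm_num
lemma br_K2_K3 : ⁅EK2, EK3⁆ = -EJ1 := by
  apply Subtype.ext
  rw [LieSubalgebra.coe_bracket, Ring.lie_def]
  push_cast
  ext i j
  fin_cases i <;> fin_cases j <;>
    simp [mJ1, mJ2, mJ3, mK1, mK2, mK3, Matrix.mul_apply, Fin.sum_univ_four,
      Matrix.vecHead, Matrix.vecTail] <;> try norm_num
lemma br_K3_J1 : ⁅EK3, EJ1⁆ = EK2 := by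
  apply Subtype.ext
  rw [LieSubalgebra.coe_bracket, Ring.lie_def]
  push_cast
  ext i j
  fin_cases i <;> fin_cases j <;>
    simp [mJ1, mJ2, mJ3, mK1, mK2, mK3, Matrix.mul_apply, Fin.sum_univ_four,
      Matrix.vecHead, Matrix.vecTail] <;> try norm_num
lemma br_K3_J2 : ⁅EK3, EJ2⁆ = -EK1 := by
  apply Subtype.ext
  rw [LieSubalgebra.coe_bracket, Ring.lie_def]
  push_cast
  ext i j
  fin_cases i <;> fin_cases j <;>
    simp [mJ1, mJ2, mJ3, mK1, mK2, mK3, Matrix.mul_apply, Fin.sum_univ_four,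
      Matrix.vecHead, Matrix.vecTail] <;> try norm_num
lemma br_K3_J3 : ⁅EK3, EJ3⁆ = 0 := by
  apply Subtype.ext
  rw [LieSubalgebra.coe_bracket, Ring.lie_def]
  push_cast
  ext i j
  fin_cases i <;> fin_cases j <;>
    simp [mJ1, mJ2, mJ3, mK1, mK2, mK3, Matrix.mul_apply, Fin.sum_univ_four,
      Matrix.vecHead, Matrix.vecTail] <;> try norm_num
lemma br_K3_K1 : ⁅EK3, EK1⁆ = -EJ2 := by
  apply Subtype.ext
  rw [LieSubalgebra.coe_bracket, Ring.lie_def]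
  push_cast
  ext i j
  fin_cases i <;> fin_cases j <;>
    simp [mJ1, mJ2, mJ3, mK1, mK2, mK3, Matrix.mul_apply, Fin.sum_univ_four,
      Matrix.vecHead, Matrix.vecTail] <;> try norm_num
lemma br_K3_K2 : ⁅EK3, EK2⁆ = EJ1 := by
  apply Subtype.ext
  rw [LieSubalgebra.coe_bracket, Ring.lie_def]
  push_cast
  ext i j
  fin_cases i <;> fin_cases j <;>
    simp [mJ1, mJ2, mJ3, mK1, mK2, mK3, Matrix.mul_apply, Fin.sum_univ_four,
      Matrix.vecHead, Matrix.vecTail] <;> try norm_num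
lemma br_K3_K3 : ⁅EK3, EK3⁆ = 0 := by
  apply Subtype.ext
  rw [LieSubalgebra.coe_bracket, Ring.lie_def]
  push_cast
  ext i j
  fin_cases i <;> fin_cases j <;>
    simp [mJ1, mJ2, mJ3, mK1, mK2, mK3, Matrix.mul_apply, Fin.sum_univ_four,
      Matrix.vecHead, Matrix.vecTail] <;> try norm_num

/-! ### Value tables -/
lemma v1_J1_J1 : B1 EJ1 EJ1 = (-2) := by
  norm_num [B1, mJ1, mJ1, Matrix.trace, Matrix.diag, Matrix.mul_apply,
    Fin.sum_univ_four, Matrix.vecHead, Matrix.vecTail, Matrix.cons_val_two, Matrix.cons_val_three]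
lemma v2_J1_J1 : B2 EJ1 EJ1 = 0 := by
  simp only [B2, coe_EJ1, coe_EJ1, Fin.sum_univ_four, eta, Matrix.diagonal_mul]
  norm_num [mJ1, mJ1, Matrix.vecHead, Matrix.vecTail, Matrix.cons_val_two, Matrix.cons_val_three]
  try simp (config := { decide := true }) [eps, det_fin_four']
  try norm_num
lemma v1_J1_J2 : B1 EJ1 EJ2 = 0 := by
  norm_num [B1, mJ1, mJ2, Matrix.trace, Matrix.diag, Matrix.mul_apply,
    Fin.sum_univ_four, Matrix.vecHead, Matrix.vecTail, Matrix.cons_val_two, Matrix.cons_val_three]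
lemma v2_J1_J2 : B2 EJ1 EJ2 = 0 := by
  simp only [B2, coe_EJ1, coe_EJ2, Fin.sum_univ_four, eta, Matrix.diagonal_mul]
  norm_num [mJ1, mJ2, Matrix.vecHead, Matrix.vecTail, Matrix.cons_val_two, Matrix.cons_val_three]
  try simp (config := { decide := true }) [eps, det_fin_four']
  try norm_num
lemma v1_J1_J3 : B1 EJ1 EJ3 = 0 := by
  norm_num [B1, mJ1, mJ3, Matrix.trace, Matrix.diag, Matrix.mul_apply,
    Fin.sum_univ_four, Matrix.vecHead, Matrix.vecTail, Matrix.cons_val_two, Matrix.cons_val_three]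
lemma v2_J1_J3 : B2 EJ1 EJ3 = 0 := by
  simp only [B2, coe_EJ1, coe_EJ3, Fin.sum_univ_four, eta, Matrix.diagonal_mul]
  norm_num [mJ1, mJ3, Matrix.vecHead, Matrix.vecTail, Matrix.cons_val_two, Matrix.cons_val_three]
  try simp (config := { decide := true }) [eps, det_fin_four']
  try norm_num
lemma v1_J1_K1 : B1 EJ1 EK1 = 0 := by
  norm_num [B1, mJ1, mK1, Matrix.trace, Matrix.diag, Matrix.mul_apply,
    Fin.sum_univ_four, Matrix.vecHead, Matrix.vecTail, Matrix.cons_val_two, Matrix.cons_val_three]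
lemma v2_J1_K1 : B2 EJ1 EK1 = 4 := by
  simp only [B2, coe_EJ1, coe_EK1, Fin.sum_univ_four, eta, Matrix.diagonal_mul]
  norm_num [mJ1, mK1, Matrix.vecHead, Matrix.vecTail, Matrix.cons_val_two, Matrix.cons_val_three]
  try simp (config := { decide := true }) [eps, det_fin_four']
  try norm_num
lemma v1_J1_K2 : B1 EJ1 EK2 = 0 := by
  norm_num [B1, mJ1, mK2, Matrix.trace, Matrix.diag, Matrix.mul_apply,
    Fin.sum_univ_four, Matrix.vecHead, Matrix.vecTail, Matrix.cons_val_two, Matrix.cons_val_three]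
lemma v2_J1_K2 : B2 EJ1 EK2 = 0 := by
  simp only [B2, coe_EJ1, coe_EK2, Fin.sum_univ_four, eta, Matrix.diagonal_mul]
  norm_num [mJ1, mK2, Matrix.vecHead, Matrix.vecTail, Matrix.cons_val_two, Matrix.cons_val_three]
  try simp (config := { decide := true }) [eps, det_fin_four']
  try norm_num
lemma v1_J1_K3 : B1 EJ1 EK3 = 0 := by
  norm_num [B1, mJ1, mK3, Matrix.trace, Matrix.diag, Matrix.mul_apply,
    Fin.sum_univ_four, Matrix.vecHead, Matrix.vecTail, Matrix.cons_val_two, Matrix.cons_val_three]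
lemma v2_J1_K3 : B2 EJ1 EK3 = 0 := by
  simp only [B2, coe_EJ1, coe_EK3, Fin.sum_univ_four, eta, Matrix.diagonal_mul]
  norm_num [mJ1, mK3, Matrix.vecHead, Matrix.vecTail, Matrix.cons_val_two, Matrix.cons_val_three]
  try simp (config := { decide := true }) [eps, det_fin_four']
  try norm_num
lemma v1_J2_J1 : B1 EJ2 EJ1 = 0 := by
  norm_num [B1, mJ2, mJ1, Matrix.trace, Matrix.diag, Matrix.mul_apply,
    Fin.sum_univ_four, Matrix.vecHead, Matrix.vecTail, Matrix.cons_val_two, Matrix.cons_val_three]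
lemma v2_J2_J1 : B2 EJ2 EJ1 = 0 := by
  simp only [B2, coe_EJ2, coe_EJ1, Fin.sum_univ_four, eta, Matrix.diagonal_mul]
  norm_num [mJ2, mJ1, Matrix.vecHead, Matrix.vecTail, Matrix.cons_val_two, Matrix.cons_val_three]
  try simp (config := { decide := true }) [eps, det_fin_four']
  try norm_num
lemma v1_J2_J2 : B1 EJ2 EJ2 = (-2) := by
  norm_num [B1, mJ2, mJ2, Matrix.trace, Matrix.diag, Matrix.mul_apply,
    Fin.sum_univ_four, Matrix.vecHead, Matrix.vecTail, Matrix.cons_val_two, Matrix.cons_val_three]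
lemma v2_J2_J2 : B2 EJ2 EJ2 = 0 := by
  simp only [B2, coe_EJ2, coe_EJ2, Fin.sum_univ_four, eta, Matrix.diagonal_mul]
  norm_num [mJ2, mJ2, Matrix.vecHead, Matrix.vecTail, Matrix.cons_val_two, Matrix.cons_val_three]
  try simp (config := { decide := true }) [eps, det_fin_four']
  try norm_num
lemma v1_J2_J3 : B1 EJ2 EJ3 = 0 := by
  norm_num [B1, mJ2, mJ3, Matrix.trace, Matrix.diag, Matrix.mul_apply,
    Fin.sum_univ_four, Matrix.vecHead, Matrix.vecTail, Matrix.cons_val_two, Matrix.cons_val_three]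
lemma v2_J2_J3 : B2 EJ2 EJ3 = 0 := by
  simp only [B2, coe_EJ2, coe_EJ3, Fin.sum_univ_four, eta, Matrix.diagonal_mul]
  norm_num [mJ2, mJ3, Matrix.vecHead, Matrix.vecTail, Matrix.cons_val_two, Matrix.cons_val_three]
  try simp (config := { decide := true }) [eps, det_fin_four']
  try norm_num
lemma v1_J2_K1 : B1 EJ2 EK1 = 0 := by
  norm_num [B1, mJ2, mK1, Matrix.trace, Matrix.diag, Matrix.mul_apply,
    Fin.sum_univ_four, Matrix.vecHead, Matrix.vecTail, Matrix.cons_val_two, Matrix.cons_val_three]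
lemma v2_J2_K1 : B2 EJ2 EK1 = 0 := by
  simp only [B2, coe_EJ2, coe_EK1, Fin.sum_univ_four, eta, Matrix.diagonal_mul]
  norm_num [mJ2, mK1, Matrix.vecHead, Matrix.vecTail, Matrix.cons_val_two, Matrix.cons_val_three]
  try simp (config := { decide := true }) [eps, det_fin_four']
  try norm_num
lemma v1_J2_K2 : B1 EJ2 EK2 = 0 := by
  norm_num [B1, mJ2, mK2, Matrix.trace, Matrix.diag, Matrix.mul_apply,
    Fin.sum_univ_four, Matrix.vecHead, Matrix.vecTail, Matrix.cons_val_two, Matrix.cons_val_three]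
lemma v2_J2_K2 : B2 EJ2 EK2 = 4 := by
  simp only [B2, coe_EJ2, coe_EK2, Fin.sum_univ_four, eta, Matrix.diagonal_mul]
  norm_num [mJ2, mK2, Matrix.vecHead, Matrix.vecTail, Matrix.cons_val_two, Matrix.cons_val_three]
  try simp (config := { decide := true }) [eps, det_fin_four']
  try norm_num
lemma v1_J2_K3 : B1 EJ2 EK3 = 0 := by
  norm_num [B1, mJ2, mK3, Matrix.trace, Matrix.diag, Matrix.mul_apply,
    Fin.sum_univ_four, Matrix.vecHead, Matrix.vecTail, Matrix.cons_val_two, Matrix.cons_val_three]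
lemma v2_J2_K3 : B2 EJ2 EK3 = 0 := by
  simp only [B2, coe_EJ2, coe_EK3, Fin.sum_univ_four, eta, Matrix.diagonal_mul]
  norm_num [mJ2, mK3, Matrix.vecHead, Matrix.vecTail, Matrix.cons_val_two, Matrix.cons_val_three]
  try simp (config := { decide := true }) [eps, det_fin_four']
  try norm_num
lemma v1_J3_J1 : B1 EJ3 EJ1 = 0 := by
  norm_num [B1, mJ3, mJ1, Matrix.trace, Matrix.diag, Matrix.mul_apply,
    Fin.sum_univ_four, Matrix.vecHead, Matrix.vecTail, Matrix.cons_val_two, Matrix.cons_val_three]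
lemma v2_J3_J1 : B2 EJ3 EJ1 = 0 := by
  simp only [B2, coe_EJ3, coe_EJ1, Fin.sum_univ_four, eta, Matrix.diagonal_mul]
  norm_num [mJ3, mJ1, Matrix.vecHead, Matrix.vecTail, Matrix.cons_val_two, Matrix.cons_val_three]
  try simp (config := { decide := true }) [eps, det_fin_four']
  try norm_num
lemma v1_J3_J2 : B1 EJ3 EJ2 = 0 := by
  norm_num [B1, mJ3, mJ2, Matrix.trace, Matrix.diag, Matrix.mul_apply,
    Fin.sum_univ_four, Matrix.vecHead, Matrix.vecTail, Matrix.cons_val_two, Matrix.cons_val_three]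
lemma v2_J3_J2 : B2 EJ3 EJ2 = 0 := by
  simp only [B2, coe_EJ3, coe_EJ2, Fin.sum_univ_four, eta, Matrix.diagonal_mul]
  norm_num [mJ3, mJ2, Matrix.vecHead, Matrix.vecTail, Matrix.cons_val_two, Matrix.cons_val_three]
  try simp (config := { decide := true }) [eps, det_fin_four']
  try norm_num
lemma v1_J3_J3 : B1 EJ3 EJ3 = (-2) := by
  norm_num [B1, mJ3, mJ3, Matrix.trace, Matrix.diag, Matrix.mul_apply,
    Fin.sum_univ_four, Matrix.vecHead, Matrix.vecTail, Matrix.cons_val_two, Matrix.cons_val_three]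
lemma v2_J3_J3 : B2 EJ3 EJ3 = 0 := by
  simp only [B2, coe_EJ3, coe_EJ3, Fin.sum_univ_four, eta, Matrix.diagonal_mul]
  norm_num [mJ3, mJ3, Matrix.vecHead, Matrix.vecTail, Matrix.cons_val_two, Matrix.cons_val_three]
  try simp (config := { decide := true }) [eps, det_fin_four']
  try norm_num
lemma v1_J3_K1 : B1 EJ3 EK1 = 0 := by
  norm_num [B1, mJ3, mK1, Matrix.trace, Matrix.diag, Matrix.mul_apply,
    Fin.sum_univ_four, Matrix.vecHead, Matrix.vecTail, Matrix.cons_val_two, Matrix.cons_val_three]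
lemma v2_J3_K1 : B2 EJ3 EK1 = 0 := by
  simp only [B2, coe_EJ3, coe_EK1, Fin.sum_univ_four, eta, Matrix.diagonal_mul]
  norm_num [mJ3, mK1, Matrix.vecHead, Matrix.vecTail, Matrix.cons_val_two, Matrix.cons_val_three]
  try simp (config := { decide := true }) [eps, det_fin_four']
  try norm_num
lemma v1_J3_K2 : B1 EJ3 EK2 = 0 := by
  norm_num [B1, mJ3, mK2, Matrix.trace, Matrix.diag, Matrix.mul_apply,
    Fin.sum_univ_four, Matrix.vecHead, Matrix.vecTail, Matrix.cons_val_two, Matrix.cons_val_three]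
lemma v2_J3_K2 : B2 EJ3 EK2 = 0 := by
  simp only [B2, coe_EJ3, coe_EK2, Fin.sum_univ_four, eta, Matrix.diagonal_mul]
  norm_num [mJ3, mK2, Matrix.vecHead, Matrix.vecTail, Matrix.cons_val_two, Matrix.cons_val_three]
  try simp (config := { decide := true }) [eps, det_fin_four']
  try norm_num
lemma v1_J3_K3 : B1 EJ3 EK3 = 0 := by
  norm_num [B1, mJ3, mK3, Matrix.trace, Matrix.diag, Matrix.mul_apply,
    Fin.sum_univ_four, Matrix.vecHead, Matrix.vecTail, Matrix.cons_val_two, Matrix.cons_val_three]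
lemma v2_J3_K3 : B2 EJ3 EK3 = 4 := by
  simp only [B2, coe_EJ3, coe_EK3, Fin.sum_univ_four, eta, Matrix.diagonal_mul]
  norm_num [mJ3, mK3, Matrix.vecHead, Matrix.vecTail, Matrix.cons_val_two, Matrix.cons_val_three]
  try simp (config := { decide := true }) [eps, det_fin_four']
  try norm_num
lemma v1_K1_J1 : B1 EK1 EJ1 = 0 := by
  norm_num [B1, mK1, mJ1, Matrix.trace, Matrix.diag, Matrix.mul_apply,
    Fin.sum_univ_four, Matrix.vecHead, Matrix.vecTail, Matrix.cons_val_two, Matrix.cons_val_three]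
lemma v2_K1_J1 : B2 EK1 EJ1 = 4 := by
  simp only [B2, coe_EK1, coe_EJ1, Fin.sum_univ_four, eta, Matrix.diagonal_mul]
  norm_num [mK1, mJ1, Matrix.vecHead, Matrix.vecTail, Matrix.cons_val_two, Matrix.cons_val_three]
  try simp (config := { decide := true }) [eps, det_fin_four']
  try norm_num
lemma v1_K1_J2 : B1 EK1 EJ2 = 0 := by
  norm_num [B1, mK1, mJ2, Matrix.trace, Matrix.diag, Matrix.mul_apply,
    Fin.sum_univ_four, Matrix.vecHead, Matrix.vecTail, Matrix.cons_val_two, Matrix.cons_val_three]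
lemma v2_K1_J2 : B2 EK1 EJ2 = 0 := by
  simp only [B2, coe_EK1, coe_EJ2, Fin.sum_univ_four, eta, Matrix.diagonal_mul]
  norm_num [mK1, mJ2, Matrix.vecHead, Matrix.vecTail, Matrix.cons_val_two, Matrix.cons_val_three]
  try simp (config := { decide := true }) [eps, det_fin_four']
  try norm_num
lemma v1_K1_J3 : B1 EK1 EJ3 = 0 := by
  norm_num [B1, mK1, mJ3, Matrix.trace, Matrix.diag, Matrix.mul_apply,
    Fin.sum_univ_four, Matrix.vecHead, Matrix.vecTail, Matrix.cons_val_two, Matrix.cons_val_three]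
lemma v2_K1_J3 : B2 EK1 EJ3 = 0 := by
  simp only [B2, coe_EK1, coe_EJ3, Fin.sum_univ_four, eta, Matrix.diagonal_mul]
  norm_num [mK1, mJ3, Matrix.vecHead, Matrix.vecTail, Matrix.cons_val_two, Matrix.cons_val_three]
  try simp (config := { decide := true }) [eps, det_fin_four']
  try norm_num
lemma v1_K1_K1 : B1 EK1 EK1 = 2 := by
  norm_num [B1, mK1, mK1, Matrix.trace, Matrix.diag, Matrix.mul_apply,
    Fin.sum_univ_four, Matrix.vecHead, Matrix.vecTail, Matrix.cons_val_two, Matrix.cons_val_three]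
lemma v2_K1_K1 : B2 EK1 EK1 = 0 := by
  simp only [B2, coe_EK1, coe_EK1, Fin.sum_univ_four, eta, Matrix.diagonal_mul]
  norm_num [mK1, mK1, Matrix.vecHead, Matrix.vecTail, Matrix.cons_val_two, Matrix.cons_val_three]
  try simp (config := { decide := true }) [eps, det_fin_four']
  try norm_num
lemma v1_K1_K2 : B1 EK1 EK2 = 0 := by
  norm_num [B1, mK1, mK2, Matrix.trace, Matrix.diag, Matrix.mul_apply,
    Fin.sum_univ_four, Matrix.vecHead, Matrix.vecTail, Matrix.cons_val_two, Matrix.cons_val_three]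
lemma v2_K1_K2 : B2 EK1 EK2 = 0 := by
  simp only [B2, coe_EK1, coe_EK2, Fin.sum_univ_four, eta, Matrix.diagonal_mul]
  norm_num [mK1, mK2, Matrix.vecHead, Matrix.vecTail, Matrix.cons_val_two, Matrix.cons_val_three]
  try simp (config := { decide := true }) [eps, det_fin_four']
  try norm_num
lemma v1_K1_K3 : B1 EK1 EK3 = 0 := by
  norm_num [B1, mK1, mK3, Matrix.trace, Matrix.diag, Matrix.mul_apply,
    Fin.sum_univ_four, Matrix.vecHead, Matrix.vecTail, Matrix.cons_val_two, Matrix.cons_val_three]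
lemma v2_K1_K3 : B2 EK1 EK3 = 0 := by
  simp only [B2, coe_EK1, coe_EK3, Fin.sum_univ_four, eta, Matrix.diagonal_mul]
  norm_num [mK1, mK3, Matrix.vecHead, Matrix.vecTail, Matrix.cons_val_two, Matrix.cons_val_three]
  try simp (config := { decide := true }) [eps, det_fin_four']
  try norm_num
lemma v1_K2_J1 : B1 EK2 EJ1 = 0 := by
  norm_num [B1, mK2, mJ1, Matrix.trace, Matrix.diag, Matrix.mul_apply,
    Fin.sum_univ_four, Matrix.vecHead, Matrix.vecTail, Matrix.cons_val_two, Matrix.cons_val_three]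
lemma v2_K2_J1 : B2 EK2 EJ1 = 0 := by
  simp only [B2, coe_EK2, coe_EJ1, Fin.sum_univ_four, eta, Matrix.diagonal_mul]
  norm_num [mK2, mJ1, Matrix.vecHead, Matrix.vecTail, Matrix.cons_val_two, Matrix.cons_val_three]
  try simp (config := { decide := true }) [eps, det_fin_four']
  try norm_num
lemma v1_K2_J2 : B1 EK2 EJ2 = 0 := by
  norm_num [B1, mK2, mJ2, Matrix.trace, Matrix.diag, Matrix.mul_apply,
    Fin.sum_univ_four, Matrix.vecHead, Matrix.vecTail, Matrix.cons_val_two, Matrix.cons_val_three]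
lemma v2_K2_J2 : B2 EK2 EJ2 = 4 := by
  simp only [B2, coe_EK2, coe_EJ2, Fin.sum_univ_four, eta, Matrix.diagonal_mul]
  norm_num [mK2, mJ2, Matrix.vecHead, Matrix.vecTail, Matrix.cons_val_two, Matrix.cons_val_three]
  try simp (config := { decide := true }) [eps, det_fin_four']
  try norm_num
lemma v1_K2_J3 : B1 EK2 EJ3 = 0 := by
  norm_num [B1, mK2, mJ3, Matrix.trace, Matrix.diag, Matrix.mul_apply,
    Fin.sum_univ_four, Matrix.vecHead, Matrix.vecTail, Matrix.cons_val_two, Matrix.cons_val_three]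
lemma v2_K2_J3 : B2 EK2 EJ3 = 0 := by
  simp only [B2, coe_EK2, coe_EJ3, Fin.sum_univ_four, eta, Matrix.diagonal_mul]
  norm_num [mK2, mJ3, Matrix.vecHead, Matrix.vecTail, Matrix.cons_val_two, Matrix.cons_val_three]
  try simp (config := { decide := true }) [eps, det_fin_four']
  try norm_num
lemma v1_K2_K1 : B1 EK2 EK1 = 0 := by
  norm_num [B1, mK2, mK1, Matrix.trace, Matrix.diag, Matrix.mul_apply,
    Fin.sum_univ_four, Matrix.vecHead, Matrix.vecTail, Matrix.cons_val_two, Matrix.cons_val_three]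
lemma v2_K2_K1 : B2 EK2 EK1 = 0 := by
  simp only [B2, coe_EK2, coe_EK1, Fin.sum_univ_four, eta, Matrix.diagonal_mul]
  norm_num [mK2, mK1, Matrix.vecHead, Matrix.vecTail, Matrix.cons_val_two, Matrix.cons_val_three]
  try simp (config := { decide := true }) [eps, det_fin_four']
  try norm_num
lemma v1_K2_K2 : B1 EK2 EK2 = 2 := by
  norm_num [B1, mK2, mK2, Matrix.trace, Matrix.diag, Matrix.mul_apply,
    Fin.sum_univ_four, Matrix.vecHead, Matrix.vecTail, Matrix.cons_val_two, Matrix.cons_val_three]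
lemma v2_K2_K2 : B2 EK2 EK2 = 0 := by
  simp only [B2, coe_EK2, coe_EK2, Fin.sum_univ_four, eta, Matrix.diagonal_mul]
  norm_num [mK2, mK2, Matrix.vecHead, Matrix.vecTail, Matrix.cons_val_two, Matrix.cons_val_three]
  try simp (config := { decide := true }) [eps, det_fin_four']
  try norm_num
lemma v1_K2_K3 : B1 EK2 EK3 = 0 := by
  norm_num [B1, mK2, mK3, Matrix.trace, Matrix.diag, Matrix.mul_apply,
    Fin.sum_univ_four, Matrix.vecHead, Matrix.vecTail, Matrix.cons_val_two, Matrix.cons_val_three]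
lemma v2_K2_K3 : B2 EK2 EK3 = 0 := by
  simp only [B2, coe_EK2, coe_EK3, Fin.sum_univ_four, eta, Matrix.diagonal_mul]
  norm_num [mK2, mK3, Matrix.vecHead, Matrix.vecTail, Matrix.cons_val_two, Matrix.cons_val_three]
  try simp (config := { decide := true }) [eps, det_fin_four']
  try norm_num
lemma v1_K3_J1 : B1 EK3 EJ1 = 0 := by
  norm_num [B1, mK3, mJ1, Matrix.trace, Matrix.diag, Matrix.mul_apply,
    Fin.sum_univ_four, Matrix.vecHead, Matrix.vecTail, Matrix.cons_val_two, Matrix.cons_val_three]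
lemma v2_K3_J1 : B2 EK3 EJ1 = 0 := by
  simp only [B2, coe_EK3, coe_EJ1, Fin.sum_univ_four, eta, Matrix.diagonal_mul]
  norm_num [mK3, mJ1, Matrix.vecHead, Matrix.vecTail, Matrix.cons_val_two, Matrix.cons_val_three]
  try simp (config := { decide := true }) [eps, det_fin_four']
  try norm_num
lemma v1_K3_J2 : B1 EK3 EJ2 = 0 := by
  norm_num [B1, mK3, mJ2, Matrix.trace, Matrix.diag, Matrix.mul_apply,
    Fin.sum_univ_four, Matrix.vecHead, Matrix.vecTail, Matrix.cons_val_two, Matrix.cons_val_three]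
lemma v2_K3_J2 : B2 EK3 EJ2 = 0 := by
  simp only [B2, coe_EK3, coe_EJ2, Fin.sum_univ_four, eta, Matrix.diagonal_mul]
  norm_num [mK3, mJ2, Matrix.vecHead, Matrix.vecTail, Matrix.cons_val_two, Matrix.cons_val_three]
  try simp (config := { decide := true }) [eps, det_fin_four']
  try norm_num
lemma v1_K3_J3 : B1 EK3 EJ3 = 0 := by
  norm_num [B1, mK3, mJ3, Matrix.trace, Matrix.diag, Matrix.mul_apply,
    Fin.sum_univ_four, Matrix.vecHead, Matrix.vecTail, Matrix.cons_val_two, Matrix.cons_val_three]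
lemma v2_K3_J3 : B2 EK3 EJ3 = 4 := by
  simp only [B2, coe_EK3, coe_EJ3, Fin.sum_univ_four, eta, Matrix.diagonal_mul]
  norm_num [mK3, mJ3, Matrix.vecHead, Matrix.vecTail, Matrix.cons_val_two, Matrix.cons_val_three]
  try simp (config := { decide := true }) [eps, det_fin_four']
  try norm_num
lemma v1_K3_K1 : B1 EK3 EK1 = 0 := by
  norm_num [B1, mK3, mK1, Matrix.trace, Matrix.diag, Matrix.mul_apply,
    Fin.sum_univ_four, Matrix.vecHead, Matrix.vecTail, Matrix.cons_val_two, Matrix.cons_val_three]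
lemma v2_K3_K1 : B2 EK3 EK1 = 0 := by
  simp only [B2, coe_EK3, coe_EK1, Fin.sum_univ_four, eta, Matrix.diagonal_mul]
  norm_num [mK3, mK1, Matrix.vecHead, Matrix.vecTail, Matrix.cons_val_two, Matrix.cons_val_three]
  try simp (config := { decide := true }) [eps, det_fin_four']
  try norm_num
lemma v1_K3_K2 : B1 EK3 EK2 = 0 := by
  norm_num [B1, mK3, mK2, Matrix.trace, Matrix.diag, Matrix.mul_apply,
    Fin.sum_univ_four, Matrix.vecHead, Matrix.vecTail, Matrix.cons_val_two, Matrix.cons_val_three]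
lemma v2_K3_K2 : B2 EK3 EK2 = 0 := by
  simp only [B2, coe_EK3, coe_EK2, Fin.sum_univ_four, eta, Matrix.diagonal_mul]
  norm_num [mK3, mK2, Matrix.vecHead, Matrix.vecTail, Matrix.cons_val_two, Matrix.cons_val_three]
  try simp (config := { decide := true }) [eps, det_fin_four']
  try norm_num
lemma v1_K3_K3 : B1 EK3 EK3 = 2 := by
  norm_num [B1, mK3, mK3, Matrix.trace, Matrix.diag, Matrix.mul_apply,
    Fin.sum_univ_four, Matrix.vecHead, Matrix.vecTail, Matrix.cons_val_two, Matrix.cons_val_three]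
lemma v2_K3_K3 : B2 EK3 EK3 = 0 := by
  simp only [B2, coe_EK3, coe_EK3, Fin.sum_univ_four, eta, Matrix.diagonal_mul]
  norm_num [mK3, mK3, Matrix.vecHead, Matrix.vecTail, Matrix.cons_val_two, Matrix.cons_val_three]
  try simp (config := { decide := true }) [eps, det_fin_four']
  try norm_num
/-! ### Bilinear-map versions of B1 and B2 -/

def b1L : so31 →ₗ[ℝ] so31 →ₗ[ℝ] ℝ :=
  LinearMap.mk₂ ℝ B1
    (fun X X' Y => by
      simp [B1, coe_add_so31, Matrix.add_mul, Matrix.trace_add])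
    (fun c X Y => by
      simp [B1, coe_smul_so31, Matrix.smul_mul, Matrix.trace_smul, smul_eq_mul])
    (fun X Y Y' => by
      simp [B1, coe_add_so31, Matrix.mul_add, Matrix.trace_add])
    (fun c X Y => by
      simp [B1, coe_smul_so31, Matrix.mul_smul, Matrix.trace_smul, smul_eq_mul])

@[simp] lemma b1L_apply (X Y : so31) : b1L X Y = B1 X Y := rfl

def b2L : so31 →ₗ[ℝ] so31 →ₗ[ℝ] ℝ :=
  LinearMap.mk₂ ℝ B2
    (fun X X' Y => by
      simp only [B2, coe_add_so31, Matrix.mul_add, Matrix.add_apply, mul_add, add_mul,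
        Finset.sum_add_distrib])
    (fun c X Y => by
      simp only [B2, coe_smul_so31, Matrix.mul_smul, Matrix.smul_apply, smul_eq_mul,
        Finset.mul_sum]
      refine Finset.sum_congr rfl fun a _ => Finset.sum_congr rfl fun b _ =>
        Finset.sum_congr rfl fun c' _ => Finset.sum_congr rfl fun d _ => by ring)
    (fun X Y Y' => by
      simp only [B2, coe_add_so31, Matrix.mul_add, Matrix.add_apply, mul_add, add_mul,
        Finset.sum_add_distrib])
    (fun c X Y => by
      simp only [B2, coe_smul_so31, Matrix.mul_smul, Matrix.smul_apply, smul_eq_mul,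
        Finset.mul_sum]
      refine Finset.sum_congr rfl fun a _ => Finset.sum_congr rfl fun b _ =>
        Finset.sum_congr rfl fun c' _ => Finset.sum_congr rfl fun d _ => by ring)

@[simp] lemma b2L_apply (X Y : so31) : b2L X Y = B2 X Y := rfl

/-- Expansion of a bilinear form along the basis. -/
lemma F_expand (F : so31 →ₗ[ℝ] so31 →ₗ[ℝ] ℝ) {X Y : so31}
    {a1 a2 a3 a4 a5 a6 b1 b2 b3 b4 b5 b6 : ℝ}
    (hX : X = a1 • EJ1 + a2 • EJ2 + a3 • EJ3 + a4 • EK1 + a5 • EK2 + a6 • EK3)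
    (hY : Y = b1 • EJ1 + b2 • EJ2 + b3 • EJ3 + b4 • EK1 + b5 • EK2 + b6 • EK3) :
    F X Y =
      a1*b1 * F EJ1 EJ1 + a1*b2 * F EJ1 EJ2 + a1*b3 * F EJ1 EJ3 + a1*b4 * F EJ1 EK1 +
      a1*b5 * F EJ1 EK2 + a1*b6 * F EJ1 EK3 +
      a2*b1 * F EJ2 EJ1 + a2*b2 * F EJ2 EJ2 + a2*b3 * F EJ2 EJ3 + a2*b4 * F EJ2 EK1 +
      a2*b5 * F EJ2 EK2 + a2*b6 * F EJ2 EK3 +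
      a3*b1 * F EJ3 EJ1 + a3*b2 * F EJ3 EJ2 + a3*b3 * F EJ3 EJ3 + a3*b4 * F EJ3 EK1 +
      a3*b5 * F EJ3 EK2 + a3*b6 * F EJ3 EK3 +
      a4*b1 * F EK1 EJ1 + a4*b2 * F EK1 EJ2 + a4*b3 * F EK1 EJ3 + a4*b4 * F EK1 EK1 +
      a4*b5 * F EK1 EK2 + a4*b6 * F EK1 EK3 +
      a5*b1 * F EK2 EJ1 + a5*b2 * F EK2 EJ2 + a5*b3 * F EK2 EJ3 + a5*b4 * F EK2 EK1 +
      a5*b5 * F EK2 EK2 + a5*b6 * F EK2 EK3 +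
      a6*b1 * F EK3 EJ1 + a6*b2 * F EK3 EJ2 + a6*b3 * F EK3 EJ3 + a6*b4 * F EK3 EK1 +
      a6*b5 * F EK3 EK2 + a6*b6 * F EK3 EK3 := by
  subst hX; subst hY
  simp only [_root_.map_add, _root_.map_smul, LinearMap.add_apply, LinearMap.smul_apply, smul_eq_mul]
  ring

/-! ### The main theorem -/

lemma B1_symm (X Y : so31) : B1 X Y = B1 Y X := by
  simp only [B1]
  exact Matrix.trace_mul_comm _ _

lemma B2_symm (X Y : so31) : B2 X Y = B2 Y X := by
  obtain ⟨a1, a2, a3, a4, a5, a6, hX⟩ := decomp X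
  obtain ⟨c1, c2, c3, c4, c5, c6, hY⟩ := decomp Y
  have e1 := F_expand b2L hX hY
  have e2 := F_expand b2L hY hX
  simp only [b2L_apply] at e1 e2
  rw [e1, e2]
  simp only [
    v2_J1_J1,
    v2_J1_J2,
    v2_J1_J3,
    v2_J1_K1,
    v2_J1_K2,
    v2_J1_K3,
    v2_J2_J1,
    v2_J2_J2,
    v2_J2_J3,
    v2_J2_K1,
    v2_J2_K2,
    v2_J2_K3,
    v2_J3_J1,
    v2_J3_J2,
    v2_J3_J3,
    v2_J3_K1,
    v2_J3_K2,
    v2_J3_K3,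
    v2_K1_J1,
    v2_K1_J2,
    v2_K1_J3,
    v2_K1_K1,
    v2_K1_K2,
    v2_K1_K3,
    v2_K2_J1,
    v2_K2_J2,
    v2_K2_J3,
    v2_K2_K1,
    v2_K2_K2,
    v2_K2_K3,
    v2_K3_J1,
    v2_K3_J2,
    v2_K3_J3,
    v2_K3_K1,
    v2_K3_K2,
    v2_K3_K3 ]
  ring

lemma B1_inv (X Y Z : so31) : B1 ⁅X, Y⁆ Z + B1 Y ⁅X, Z⁆ = 0 := by
  simp only [B1, LieSubalgebra.coe_bracket, Ring.lie_def, Matrix.sub_mul, Matrix.mul_sub,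
    Matrix.trace_sub, Matrix.mul_assoc]
  have h := Matrix.trace_mul_comm (X : Matrix (Fin 4) (Fin 4) ℝ)
    ((Y : Matrix (Fin 4) (Fin 4) ℝ) * (Z : Matrix (Fin 4) (Fin 4) ℝ))
  rw [Matrix.mul_assoc] at h
  linarith

lemma B2_inv (X Y Z : so31) : B2 ⁅X, Y⁆ Z + B2 Y ⁅X, Z⁆ = 0 := by
  obtain ⟨a1, a2, a3, a4, a5, a6, hX⟩ := decomp X
  obtain ⟨c1, c2, c3, c4, c5, c6, hY⟩ := decomp Y
  obtain ⟨d1, d2, d3, d4, d5, d6, hZ⟩ := decomp Z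
  rw [hX, hY, hZ]
  simp only [lie_add, add_lie, lie_smul, smul_lie,
    br_J1_J1,
    br_J1_J2,
    br_J1_J3,
    br_J1_K1,
    br_J1_K2,
    br_J1_K3,
    br_J2_J1,
    br_J2_J2,
    br_J2_J3,
    br_J2_K1,
    br_J2_K2,
    br_J2_K3,
    br_J3_J1,
    br_J3_J2,
    br_J3_J3,
    br_J3_K1,
    br_J3_K2,
    br_J3_K3,
    br_K1_J1,
    br_K1_J2,
    br_K1_J3,
    br_K1_K1,
    br_K1_K2,
    br_K1_K3,
    br_K2_J1,
    br_K2_J2,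
    br_K2_J3,
    br_K2_K1,
    br_K2_K2,
    br_K2_K3,
    br_K3_J1,
    br_K3_J2,
    br_K3_J3,
    br_K3_K1,
    br_K3_K2,
    br_K3_K3,
    smul_zero, smul_neg, add_zero, zero_add, neg_zero]
  simp only [← b2L_apply]
  simp only [_root_.map_add, _root_.map_smul, _root_.map_neg, _root_.map_zero, LinearMap.add_apply, LinearMap.smul_apply,
    LinearMap.neg_apply, LinearMap.zero_apply, smul_eq_mul]
  simp only [b2L_apply]
  simp only [
    v2_J1_J1,
    v2_J1_J2,
    v2_J1_J3,
    v2_J1_K1,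
    v2_J1_K2,
    v2_J1_K3,
    v2_J2_J1,
    v2_J2_J2,
    v2_J2_J3,
    v2_J2_K1,
    v2_J2_K2,
    v2_J2_K3,
    v2_J3_J1,
    v2_J3_J2,
    v2_J3_J3,
    v2_J3_K1,
    v2_J3_K2,
    v2_J3_K3,
    v2_K1_J1,
    v2_K1_J2,
    v2_K1_J3,
    v2_K1_K1,
    v2_K1_K2,
    v2_K1_K3,
    v2_K2_J1,
    v2_K2_J2,
    v2_K2_J3,
    v2_K2_K1,
    v2_K2_K2,
    v2_K2_K3,
    v2_K3_J1,
    v2_K3_J2,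
    v2_K3_J3,
    v2_K3_K1,
    v2_K3_K2,
    v2_K3_K3 ]
  ring

/-- the real vector space of ad-invariant symmetric bilinear forms on
`so(3,1)` (those with `B([X,Y],Z) + B(Y,[X,Z]) = 0`) is two-dimensional, spanned by
`B₁(A,B) = tr(AB)` and `B₂(A,B) = Σ ε^{abcd} (ηA)_{ab} (ηB)_{cd}`: the forms `B₁`
and `B₂` are themselves symmetric and ad-invariant, and every ad-invariant symmetric
bilinear form is a unique linear combination of them. -/
theorem invariant_symmetric_bilinear_forms_two_dimensional :
    (∀ X Y : so31, B1 X Y = B1 Y X) ∧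
    (∀ X Y : so31, B2 X Y = B2 Y X) ∧
    (∀ X Y Z : so31, B1 ⁅X, Y⁆ Z + B1 Y ⁅X, Z⁆ = 0) ∧
    (∀ X Y Z : so31, B2 ⁅X, Y⁆ Z + B2 Y ⁅X, Z⁆ = 0) ∧
    (∀ B : so31 →ₗ[ℝ] so31 →ₗ[ℝ] ℝ,
      (∀ X Y : so31, B X Y = B Y X) →
      (∀ X Y Z : so31, B ⁅X, Y⁆ Z + B Y ⁅X, Z⁆ = 0) →
      ∃! p : ℝ × ℝ, ∀ X Y : so31, B X Y = p.1 * B1 X Y + p.2 * B2 X Y) := by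
  refine ⟨B1_symm, B2_symm, B1_inv, B2_inv, ?_⟩
  intro B hsym hinv
  -- derive the structure of B on the basis
  have t1 := hinv EJ1 EJ2 EJ3
  rw [br_J1_J2, br_J1_J3] at t1
  simp only [_root_.map_neg, LinearMap.neg_apply] at t1
  have t2 := hinv EJ2 EJ3 EJ1
  rw [br_J2_J3, br_J2_J1] at t2
  simp only [_root_.map_neg, LinearMap.neg_apply] at t2
  have w33 : B EJ3 EJ3 = B EJ1 EJ1 := by linarith
  have w22 : B EJ2 EJ2 = B EJ1 EJ1 := by linarith
  have t3 := hinv EJ1 EJ2 EJ2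
  rw [br_J1_J2] at t3
  have z23 : B EJ2 EJ3 = 0 := by have := hsym EJ3 EJ2; linarith
  have z32 : B EJ3 EJ2 = 0 := by have := hsym EJ3 EJ2; linarith
  have t4 := hinv EJ2 EJ3 EJ3
  rw [br_J2_J3] at t4
  have z13 : B EJ1 EJ3 = 0 := by have := hsym EJ3 EJ1; linarith
  have z31 : B EJ3 EJ1 = 0 := by have := hsym EJ3 EJ1; linarith
  have t5 := hinv EJ3 EJ1 EJ1
  rw [br_J3_J1] at t5
  have z12 : B EJ1 EJ2 = 0 := by have := hsym EJ2 EJ1; linarith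
  have z21 : B EJ2 EJ1 = 0 := by have := hsym EJ2 EJ1; linarith
  -- K block
  have t6 := hinv EJ1 EK2 EK3
  rw [br_J1_K2, br_J1_K3] at t6
  simp only [_root_.map_neg, LinearMap.neg_apply] at t6
  have t7 := hinv EJ2 EK3 EK1
  rw [br_J2_K3, br_J2_K1] at t7
  simp only [_root_.map_neg, LinearMap.neg_apply] at t7
  have t8 := hinv EK1 EK2 EJ3
  rw [br_K1_K2, br_K1_J3] at t8
  simp only [_root_.map_neg, LinearMap.neg_apply] at t8
  have wK22 : B EK2 EK2 = -B EJ1 EJ1 := by linarith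
  have wK33 : B EK3 EK3 = -B EJ1 EJ1 := by linarith
  have wK11 : B EK1 EK1 = -B EJ1 EJ1 := by linarith
  have t9 := hinv EJ1 EK2 EK2
  rw [br_J1_K2] at t9
  have zK23 : B EK2 EK3 = 0 := by have := hsym EK3 EK2; linarith
  have zK32 : B EK3 EK2 = 0 := by have := hsym EK3 EK2; linarith
  have t10 := hinv EJ2 EK3 EK3
  rw [br_J2_K3] at t10
  have zK13 : B EK1 EK3 = 0 := by have := hsym EK3 EK1; linarith
  have zK31 : B EK3 EK1 = 0 := by have := hsym EK3 EK1; linarith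
  have t11 := hinv EJ3 EK1 EK1
  rw [br_J3_K1] at t11
  have zK12 : B EK1 EK2 = 0 := by have := hsym EK2 EK1; linarith
  have zK21 : B EK2 EK1 = 0 := by have := hsym EK2 EK1; linarith
  -- mixed diagonal
  have t12 := hinv EJ1 EJ2 EK3
  rw [br_J1_J2, br_J1_K3] at t12
  simp only [_root_.map_neg, LinearMap.neg_apply] at t12
  have t13 := hinv EJ2 EJ3 EK1
  rw [br_J2_J3, br_J2_K1] at t13
  simp only [_root_.map_neg, LinearMap.neg_apply] at t13
  have m33 : B EJ3 EK3 = B EJ1 EK1 := by linarith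
  have m22 : B EJ2 EK2 = B EJ1 EK1 := by linarith
  have s11 : B EK1 EJ1 = B EJ1 EK1 := hsym _ _
  have s22 : B EK2 EJ2 = B EJ1 EK1 := by rw [hsym]; exact m22
  have s33 : B EK3 EJ3 = B EJ1 EK1 := by rw [hsym]; exact m33
  -- mixed off-diagonal
  have t14 := hinv EK3 EJ1 EJ1
  rw [br_K3_J1] at t14
  have x12 : B EJ1 EK2 = 0 := by have := hsym EK2 EJ1; linarith
  have y21 : B EK2 EJ1 = 0 := by have := hsym EK2 EJ1; linarith
  have t15 := hinv EK2 EJ1 EJ1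
  rw [br_K2_J1] at t15
  simp only [_root_.map_neg, LinearMap.neg_apply] at t15
  have x13 : B EJ1 EK3 = 0 := by have := hsym EK3 EJ1; linarith
  have y31 : B EK3 EJ1 = 0 := by have := hsym EK3 EJ1; linarith
  have t16 := hinv EK3 EJ2 EJ2
  rw [br_K3_J2] at t16
  simp only [_root_.map_neg, LinearMap.neg_apply] at t16
  have x21 : B EJ2 EK1 = 0 := by have := hsym EK1 EJ2; linarith
  have y12 : B EK1 EJ2 = 0 := by have := hsym EK1 EJ2; linarith
  have t17 := hinv EK1 EJ2 EJ2
  rw [br_K1_J2] at t17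
  have x23 : B EJ2 EK3 = 0 := by have := hsym EK3 EJ2; linarith
  have y32 : B EK3 EJ2 = 0 := by have := hsym EK3 EJ2; linarith
  have t18 := hinv EK2 EJ3 EJ3
  rw [br_K2_J3] at t18
  have x31 : B EJ3 EK1 = 0 := by have := hsym EK1 EJ3; linarith
  have y13 : B EK1 EJ3 = 0 := by have := hsym EK1 EJ3; linarith
  have t19 := hinv EK1 EJ3 EJ3
  rw [br_K1_J3] at t19
  simp only [_root_.map_neg, LinearMap.neg_apply] at t19
  have x32 : B EJ3 EK2 = 0 := by have := hsym EK2 EJ3; linarith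
  have y23 : B EK2 EJ3 = 0 := by have := hsym EK2 EJ3; linarith
  refine ⟨⟨-(B EJ1 EJ1)/2, B EJ1 EK1/4⟩, ?_, ?_⟩
  · intro X Y
    obtain ⟨a1, a2, a3, a4, a5, a6, hX⟩ := decomp X
    obtain ⟨c1, c2, c3, c4, c5, c6, hY⟩ := decomp Y
    have eB := F_expand B hX hY
    have e1 := F_expand b1L hX hY
    have e2 := F_expand b2L hX hY
    simp only [b1L_apply] at e1
    simp only [b2L_apply] at e2
    rw [eB, e1, e2]
    simp only [
    v1_J1_J1,
    v1_J1_J2,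
    v1_J1_J3,
    v1_J1_K1,
    v1_J1_K2,
    v1_J1_K3,
    v1_J2_J1,
    v1_J2_J2,
    v1_J2_J3,
    v1_J2_K1,
    v1_J2_K2,
    v1_J2_K3,
    v1_J3_J1,
    v1_J3_J2,
    v1_J3_J3,
    v1_J3_K1,
    v1_J3_K2,
    v1_J3_K3,
    v1_K1_J1,
    v1_K1_J2,
    v1_K1_J3,
    v1_K1_K1,
    v1_K1_K2,
    v1_K1_K3,
    v1_K2_J1,
    v1_K2_J2,
    v1_K2_J3,
    v1_K2_K1,
    v1_K2_K2,
    v1_K2_K3,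
    v1_K3_J1,
    v1_K3_J2,
    v1_K3_J3,
    v1_K3_K1,
    v1_K3_K2,
    v1_K3_K3,
    v2_J1_J1,
    v2_J1_J2,
    v2_J1_J3,
    v2_J1_K1,
    v2_J1_K2,
    v2_J1_K3,
    v2_J2_J1,
    v2_J2_J2,
    v2_J2_J3,
    v2_J2_K1,
    v2_J2_K2,
    v2_J2_K3,
    v2_J3_J1,
    v2_J3_J2,
    v2_J3_J3,
    v2_J3_K1,
    v2_J3_K2,
    v2_J3_K3,
    v2_K1_J1,
    v2_K1_J2,
    v2_K1_J3,
    v2_K1_K1,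
    v2_K1_K2,
    v2_K1_K3,
    v2_K2_J1,
    v2_K2_J2,
    v2_K2_J3,
    v2_K2_K1,
    v2_K2_K2,
    v2_K2_K3,
    v2_K3_J1,
    v2_K3_J2,
    v2_K3_J3,
    v2_K3_K1,
    v2_K3_K2,
    v2_K3_K3 ]
    simp only [w33, w22, wK11, wK22, wK33, z12, z21, z13, z31, z23, z32, zK12, zK21,
      zK13, zK31, zK23, zK32, m22, m33, s11, s22, s33, x12, x13, x21, x23, x31, x32,
      y12, y13, y21, y23, y31, y32]
    ring
  · rintro ⟨p1, p2⟩ hp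
    have h1 := hp EJ1 EJ1
    have h2 := hp EJ1 EK1
    rw [v1_J1_J1, v2_J1_J1] at h1
    rw [v1_J1_K1, v2_J1_K1] at h2
    have hp1 : p1 = -(B EJ1 EJ1)/2 := by norm_num at h1; linarith
    have hp2 : p2 = B EJ1 EK1/4 := by norm_num at h2; linarith
    rw [Prod.mk.injEq]
    exact ⟨hp1, hp2⟩
end
end
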